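/- arXiv:1603.04140 — 2 statements merged into one kernel-verified Lean document; each statement's English description precedes it below -/
import Mathlib

section
/- (Step 4 of the proof of Theorem 1.) Under the standing hypotheses, for all indices h_1, h_2 with 1 ≤ h_1 < h_2 ≤ K and every item j ∈ {1, …, J}: θ_{j, e_{h_1}+e_{h_2}} = θ̄_{j, e_{h_1}+e_{h_2}}, and moreover p_{e_{h_1}+e_{h_2}} = p̄_{e_{h_1}+e_{h_2}} (here e_{h_1}+e_{h_2} denotes the attribute profile having 1 exactly in coordinates h_1 and h_2). -/
open Finset

/-- `u ⪰ v`: componentwise domination of binary vectors. -/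
def dominates {n : ℕ} (u v : Fin n → Bool) : Prop := ∀ i, v i = true → u i = true

instance {n : ℕ} (u v : Fin n → Bool) : Decidable (dominates u v) :=
  inferInstanceAs (Decidable (∀ i, v i = true → u i = true))

/-- The all-zeros attribute profile. -/
def allZero (K : ℕ) : Fin K → Bool := fun _ => false

/-- The all-ones attribute profile. -/
def allOne (K : ℕ) : Fin K → Bool := fun _ => true

/-- The `k`-th standard basis attribute profile `e_k`. -/
def basis {K : ℕ} (k : Fin K) : Fin K → Bool := fun i => decide (i = k)

/-- `P(R = r | Q, Θ, p) = Σ_α p_α ∏_j θ_{j,α}^{r_j} (1-θ_{j,α})^{1-r_j}`. -/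
def respProb {J K : ℕ} (θ : Fin J → (Fin K → Bool) → ℝ) (p : (Fin K → Bool) → ℝ)
    (r : Fin J → Bool) : ℝ :=
  ∑ α : Fin K → Bool, p α * ∏ j, (if r j then θ j α else 1 - θ j α)

/-- The `(r, α)` entry of the T-matrix: `t_{r,α}(Θ) = ∏_{j : r_j = 1} θ_{j,α}`. -/
def tEntry {J K : ℕ} (θ : Fin J → (Fin K → Bool) → ℝ) (r : Fin J → Bool)
    (α : Fin K → Bool) : ℝ :=
  ∏ j, (if r j then θ j α else 1)

/-- The `r`-entry of the vector `T(Q,Θ) p`. -/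
def Tp {J K : ℕ} (θ : Fin J → (Fin K → Bool) → ℝ) (p : (Fin K → Bool) → ℝ)
    (r : Fin J → Bool) : ℝ :=
  ∑ α : Fin K → Bool, tEntry θ r α * p α

/-- All item parameters lie in the open unit interval. -/
def ThetaValid {J K : ℕ} (θ : Fin J → (Fin K → Bool) → ℝ) : Prop :=
  ∀ j α, θ j α ∈ Set.Ioo (0 : ℝ) 1

/-- A valid class distribution: every `p_α ∈ (0,1)` and `Σ_α p_α = 1`. -/
def PValid {K : ℕ} (p : (Fin K → Bool) → ℝ) : Prop :=
  (∀ α, p α ∈ Set.Ioo (0 : ℝ) 1) ∧ ∑ α : Fin K → Bool, p α = 1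

/-- Model restriction (R1) with respect to the Q-matrix `Q`. -/
def R1 {J K : ℕ} (Q : Fin J → Fin K → Bool) (θ : Fin J → (Fin K → Bool) → ℝ) : Prop :=
  ∀ j : Fin J,
    (∀ α α' : Fin K → Bool, dominates α (Q j) → dominates α' (Q j) → θ j α = θ j α') ∧
    (∀ αs α' : Fin K → Bool, dominates αs (Q j) → θ j α' ≤ θ j αs) ∧
    (∀ α' : Fin K → Bool, θ j (allZero K) ≤ θ j α')

/-- Model restriction (R2) with respect to the Q-matrix `Q`. -/
def R2 {J K : ℕ} (Q : Fin J → Fin K → Bool) (θ : Fin J → (Fin K → Bool) → ℝ) : Prop :=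
  ∀ (k : Fin K) (j : Fin J), Q j = basis k →
    ∀ α : Fin K → Bool, α k = false → θ j α < θ j (allOne K)

/-- Condition (C1): the first `2K` rows of `Q` form two copies of the identity. -/
def C1 {J K : ℕ} (Q : Fin J → Fin K → Bool) : Prop :=
  ∀ (k : Fin K) (h1 : (k : ℕ) < J) (h2 : K + (k : ℕ) < J),
    Q ⟨k, h1⟩ = basis k ∧ Q ⟨K + (k : ℕ), h2⟩ = basis k

/-- Condition (C2): for every `k`, `(θ_{j,e_k})_{j > 2K} ≠ (θ_{j,0})_{j > 2K}`. -/
def C2 {J K : ℕ} (θ : Fin J → (Fin K → Bool) → ℝ) : Prop :=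
  ∀ k : Fin K, ∃ j : Fin J, 2 * K ≤ (j : ℕ) ∧ θ j (basis k) ≠ θ j (allZero K)
namespace Step4Proof

variable {J K : ℕ}

/-- Bundled standing hypotheses. -/
structure Ctx (J K : ℕ) where
  Q : Fin J → Fin K → Bool
  th : Fin J → (Fin K → Bool) → ℝ
  thb : Fin J → (Fin K → Bool) → ℝ
  p : (Fin K → Bool) → ℝ
  pb : (Fin K → Bool) → ℝ
  hJ : 2 * K ≤ J
  hth : ThetaValid th
  hthb : ThetaValid thb
  hp : PValid p
  hpb : PValid pb
  hR1 : R1 Q th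
  hR1b : R1 Q thb
  hR2 : R2 Q th
  hR2b : R2 Q thb
  hC1 : C1 Q
  hC2 : C2 th
  hT : ∀ r : Fin J → Bool, Tp th p r = Tp thb pb r

namespace Ctx

variable (c : Ctx J K)

def i1 (k : Fin K) : Fin J := ⟨(k : ℕ), by have := k.2; have := c.hJ; omega⟩
def i2 (k : Fin K) : Fin J := ⟨K + (k : ℕ), by have := k.2; have := c.hJ; omega⟩

lemma i1_val (k : Fin K) : ((c.i1 k : Fin J) : ℕ) = (k : ℕ) := rfl
lemma i2_val (k : Fin K) : ((c.i2 k : Fin J) : ℕ) = K + (k : ℕ) := rfl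

lemma i1_inj : Function.Injective c.i1 := by
  intro a b h
  have h2 : ((c.i1 a : Fin J) : ℕ) = ((c.i1 b : Fin J) : ℕ) := congrArg (fun x : Fin J => (x : ℕ)) h
  exact Fin.ext h2

lemma i2_inj : Function.Injective c.i2 := by
  intro a b h
  have h2 : ((c.i2 a : Fin J) : ℕ) = ((c.i2 b : Fin J) : ℕ) := congrArg (fun x : Fin J => (x : ℕ)) h
  simp only [i2_val] at h2
  exact Fin.ext (by omega)

lemma Q_i1 (k : Fin K) : c.Q (c.i1 k) = basis k := (c.hC1 k (c.i1 k).2 (c.i2 k).2).1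
lemma Q_i2 (k : Fin K) : c.Q (c.i2 k) = basis k := (c.hC1 k (c.i1 k).2 (c.i2 k).2).2

/-- The set of "extra" items `j ≥ 2K`. -/
def RestS (c : Ctx J K) : Finset (Fin J) := univ.filter (fun j => 2 * K ≤ (j : ℕ))

lemma mem_RestS {j : Fin J} : j ∈ c.RestS ↔ 2 * K ≤ (j : ℕ) := by
  simp [RestS]

lemma mem_im1 {j : Fin J} : j ∈ (univ : Finset (Fin K)).image c.i1 ↔ (j : ℕ) < K := by
  constructor
  · rintro h
    rcases Finset.mem_image.1 h with ⟨k, -, rfl⟩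
    exact k.2
  · intro h
    exact Finset.mem_image.2 ⟨⟨(j : ℕ), h⟩, Finset.mem_univ _, by apply Fin.ext; rfl⟩

lemma mem_im2 {j : Fin J} :
    j ∈ (univ : Finset (Fin K)).image c.i2 ↔ K ≤ (j : ℕ) ∧ (j : ℕ) < 2 * K := by
  constructor
  · rintro h
    rcases Finset.mem_image.1 h with ⟨k, -, rfl⟩
    have := k.2
    refine ⟨Nat.le_add_right _ _, ?_⟩
    show K + (k:ℕ) < 2*K
    omega
  · rintro ⟨h1, h2⟩
    refine Finset.mem_image.2 ⟨⟨(j : ℕ) - K, by omega⟩, Finset.mem_univ _, ?_⟩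
    apply Fin.ext; show K + ((j : ℕ) - K) = (j : ℕ); omega

/-- Splitting a product over all items into the two identity blocks and the rest. -/
lemma prod_split (F : Fin J → ℝ) :
    ∏ j, F j = (∏ k, F (c.i1 k)) * (∏ k, F (c.i2 k)) * ∏ j ∈ c.RestS, F j := by
  classical
  have hsets : (univ : Finset (Fin J)) =
      ((univ : Finset (Fin K)).image c.i1 ∪ (univ : Finset (Fin K)).image c.i2) ∪ c.RestS := by
    ext j
    simp only [Finset.mem_union, c.mem_im1, c.mem_im2, c.mem_RestS, Finset.mem_univ, true_iff]
    omega
  have hd1 : Disjoint ((univ : Finset (Fin K)).image c.i1) ((univ : Finset (Fin K)).image c.i2) := by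
    rw [Finset.disjoint_left]
    intro j h1 h2
    rw [c.mem_im1] at h1; rw [c.mem_im2] at h2; omega
  have hd2 : Disjoint (((univ : Finset (Fin K)).image c.i1 ∪ (univ : Finset (Fin K)).image c.i2))
      c.RestS := by
    rw [Finset.disjoint_left]
    intro j h1 h2
    rw [Finset.mem_union, c.mem_im1, c.mem_im2] at h1; rw [c.mem_RestS] at h2; omega
  calc ∏ j, F j = ∏ j ∈ ((univ.image c.i1 ∪ univ.image c.i2) ∪ c.RestS), F j := by rw [← hsets]
    _ = (∏ j ∈ (univ.image c.i1 ∪ univ.image c.i2), F j) * ∏ j ∈ c.RestS, F j :=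
        Finset.prod_union hd2
    _ = ((∏ j ∈ univ.image c.i1, F j) * ∏ j ∈ univ.image c.i2, F j) * ∏ j ∈ c.RestS, F j := by
        rw [Finset.prod_union hd1]
    _ = _ := by
        rw [Finset.prod_image (fun a _ b _ h => c.i1_inj h),
            Finset.prod_image (fun a _ b _ h => c.i2_inj h)]

/-- Lemma A : the fundamental family of identities derived from `T(Q,Θ)p = T(Q,Θ̄)p̄`:
for any set of items (given by mask `M`) and any shifts `X`. -/
lemma lemA (M : Fin J → Bool) (X : Fin J → ℝ) :
    ∑ α : Fin K → Bool, c.p α * ∏ j, (if M j then c.th j α - X j else 1)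
  = ∑ α : Fin K → Bool, c.pb α * ∏ j, (if M j then c.thb j α - X j else 1) := by
  classical
  set S : Finset (Fin J) := univ.filter (fun j => M j = true) with hS
  have main : ∀ (g : Fin J → (Fin K → Bool) → ℝ) (q : (Fin K → Bool) → ℝ),
      ∑ α : Fin K → Bool, q α * ∏ j, (if M j then g j α - X j else 1)
    = ∑ T ∈ S.powerset, (∏ j ∈ S \ T, (-X j)) * Tp g q (fun j => decide (j ∈ T)) := by
    intro g q
    have h1 : ∀ α : Fin K → Bool, (∏ j, (if M j then g j α - X j else 1))
        = ∑ T ∈ S.powerset, (∏ j ∈ T, g j α) * ∏ j ∈ S \ T, (-X j) := by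
      intro α
      rw [show (∏ j, (if M j then g j α - X j else 1))
            = ∏ j ∈ S, (g j α - X j) from (Finset.prod_filter _ _).symm]
      have := Finset.prod_add (fun j => g j α) (fun j => -X j) S
      simpa [sub_eq_add_neg] using this
    have h2 : ∀ (T : Finset (Fin J)) (α : Fin K → Bool),
        (∏ j ∈ T, g j α) = tEntry g (fun j => decide (j ∈ T)) α := by
      intro T α
      rw [tEntry]
      rw [show (∏ j, (if (decide (j ∈ T) : Bool) then g j α else 1))
            = ∏ j ∈ univ.filter (fun j => (decide (j ∈ T) : Bool) = true), g j α from
          (Finset.prod_filter _ _).symm]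
      congr 1
      ext j; simp
    calc ∑ α : Fin K → Bool, q α * ∏ j, (if M j then g j α - X j else 1)
        = ∑ α : Fin K → Bool, ∑ T ∈ S.powerset,
            q α * ((∏ j ∈ T, g j α) * ∏ j ∈ S \ T, (-X j)) := by
          refine Finset.sum_congr rfl fun α _ => ?_
          rw [h1 α, Finset.mul_sum]
      _ = ∑ T ∈ S.powerset, ∑ α : Fin K → Bool,
            q α * ((∏ j ∈ T, g j α) * ∏ j ∈ S \ T, (-X j)) := Finset.sum_comm
      _ = ∑ T ∈ S.powerset, (∏ j ∈ S \ T, (-X j)) * Tp g q (fun j => decide (j ∈ T)) := by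
          refine Finset.sum_congr rfl fun T _ => ?_
          rw [Tp, Finset.mul_sum]
          refine Finset.sum_congr rfl fun α _ => ?_
          rw [h2 T α]; ring
  rw [main c.th c.p, main c.thb c.pb]
  exact Finset.sum_congr rfl fun T _ => by rw [c.hT]

end Ctx
end Step4Proof
namespace Step4Proof

variable {J K : ℕ}

/-- blockwise mask : first identity block, second identity block, extra items. -/
def bMask (m1 m2 : Fin K → Bool) (mE : Fin J → Bool) : Fin J → Bool := fun j =>
  if h : (j : ℕ) < K then m1 ⟨(j : ℕ), h⟩
  else if h2 : (j : ℕ) < 2 * K then m2 ⟨(j : ℕ) - K, by omega⟩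
  else mE j

/-- blockwise shifts. -/
def bShift (x1 x2 : Fin K → ℝ) (xE : Fin J → ℝ) : Fin J → ℝ := fun j =>
  if h : (j : ℕ) < K then x1 ⟨(j : ℕ), h⟩
  else if h2 : (j : ℕ) < 2 * K then x2 ⟨(j : ℕ) - K, by omega⟩
  else xE j

namespace Ctx

variable (c : Ctx J K)

lemma bMask_i1 (m1 m2 : Fin K → Bool) (mE : Fin J → Bool) (k : Fin K) :
    bMask m1 m2 mE (c.i1 k) = m1 k := by
  unfold bMask
  rw [dif_pos (show ((c.i1 k : Fin J) : ℕ) < K from k.2)]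
  exact congrArg _ (Fin.ext rfl)

lemma bMask_i2 (m1 m2 : Fin K → Bool) (mE : Fin J → Bool) (k : Fin K) :
    bMask m1 m2 mE (c.i2 k) = m2 k := by
  unfold bMask
  have h2 : ((c.i2 k : Fin J) : ℕ) = K + (k : ℕ) := rfl
  rw [dif_neg (by omega), dif_pos (by have := k.2; omega)]
  exact congrArg _ (Fin.ext (show K + (k:ℕ) - K = (k:ℕ) by omega))

lemma bMask_rest (m1 m2 : Fin K → Bool) (mE : Fin J → Bool) {j : Fin J} (h : 2 * K ≤ (j : ℕ)) :
    bMask m1 m2 mE j = mE j := by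
  unfold bMask
  rw [dif_neg (by omega), dif_neg (by omega)]

lemma bShift_i1 (x1 x2 : Fin K → ℝ) (xE : Fin J → ℝ) (k : Fin K) :
    bShift x1 x2 xE (c.i1 k) = x1 k := by
  unfold bShift
  rw [dif_pos (show ((c.i1 k : Fin J) : ℕ) < K from k.2)]
  exact congrArg _ (Fin.ext rfl)

lemma bShift_i2 (x1 x2 : Fin K → ℝ) (xE : Fin J → ℝ) (k : Fin K) :
    bShift x1 x2 xE (c.i2 k) = x2 k := by
  unfold bShift
  have h2 : ((c.i2 k : Fin J) : ℕ) = K + (k : ℕ) := rfl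
  rw [dif_neg (by omega), dif_pos (by have := k.2; omega)]
  exact congrArg _ (Fin.ext (show K + (k:ℕ) - K = (k:ℕ) by omega))

lemma bShift_rest (x1 x2 : Fin K → ℝ) (xE : Fin J → ℝ) {j : Fin J} (h : 2 * K ≤ (j : ℕ)) :
    bShift x1 x2 xE j = xE j := by
  unfold bShift
  rw [dif_neg (by omega), dif_neg (by omega)]

/-- product of shifted factors over the first identity block. -/
def pf1 (g : Fin J → (Fin K → Bool) → ℝ) (m1 : Fin K → Bool) (x1 : Fin K → ℝ)
    (α : Fin K → Bool) : ℝ :=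
  ∏ ν, (if m1 ν then g (c.i1 ν) α - x1 ν else 1)

/-- product of shifted factors over the second identity block. -/
def pf2 (g : Fin J → (Fin K → Bool) → ℝ) (m2 : Fin K → Bool) (x2 : Fin K → ℝ)
    (α : Fin K → Bool) : ℝ :=
  ∏ ν, (if m2 ν then g (c.i2 ν) α - x2 ν else 1)

/-- product of shifted factors over the extra items. -/
def pfE (g : Fin J → (Fin K → Bool) → ℝ) (mE : Fin J → Bool) (xE : Fin J → ℝ)
    (α : Fin K → Bool) : ℝ :=
  ∏ j ∈ c.RestS, (if mE j then g j α - xE j else 1)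

/-- The workhorse identity: blockwise version of Lemma A. -/
lemma key (m1 m2 : Fin K → Bool) (x1 x2 : Fin K → ℝ) (mE : Fin J → Bool) (xE : Fin J → ℝ) :
    ∑ α : Fin K → Bool,
      c.p α * (c.pf1 c.th m1 x1 α * c.pf2 c.th m2 x2 α * c.pfE c.th mE xE α)
  = ∑ α : Fin K → Bool,
      c.pb α * (c.pf1 c.thb m1 x1 α * c.pf2 c.thb m2 x2 α * c.pfE c.thb mE xE α) := by
  classical
  have base := c.lemA (bMask m1 m2 mE) (bShift x1 x2 xE)
  have split : ∀ (g : Fin J → (Fin K → Bool) → ℝ) (α : Fin K → Bool),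
      (∏ j, (if bMask m1 m2 mE j then g j α - bShift x1 x2 xE j else 1))
    = c.pf1 g m1 x1 α * c.pf2 g m2 x2 α * c.pfE g mE xE α := by
    intro g α
    rw [c.prod_split (fun j => if bMask m1 m2 mE j then g j α - bShift x1 x2 xE j else 1)]
    congr 1
    · congr 1
      · exact Finset.prod_congr rfl fun k _ => by
          rw [c.bMask_i1, c.bShift_i1]
      · exact Finset.prod_congr rfl fun k _ => by
          rw [c.bMask_i2, c.bShift_i2]
    · exact Finset.prod_congr rfl fun j hj => by
        rw [bMask_rest _ _ _ (c.mem_RestS.1 hj), bShift_rest _ _ _ (c.mem_RestS.1 hj)]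
  calc ∑ α : Fin K → Bool,
      c.p α * (c.pf1 c.th m1 x1 α * c.pf2 c.th m2 x2 α * c.pfE c.th mE xE α)
      = ∑ α : Fin K → Bool,
        c.p α * ∏ j, (if bMask m1 m2 mE j then c.th j α - bShift x1 x2 xE j else 1) := by
        exact Finset.sum_congr rfl fun α _ => by rw [split c.th α]
    _ = ∑ α : Fin K → Bool,
        c.pb α * ∏ j, (if bMask m1 m2 mE j then c.thb j α - bShift x1 x2 xE j else 1) := base
    _ = _ := Finset.sum_congr rfl fun α _ => by rw [split c.thb α]

end Ctx
end Step4Proof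
namespace Step4Proof

variable {J K : ℕ}

lemma dom_allOne (v : Fin K → Bool) : dominates (allOne K) v := fun _ _ => rfl

lemma dom_basis {α : Fin K → Bool} {k : Fin K} (h : α k = true) : dominates α (basis k) := by
  intro i hi
  have : i = k := by simpa [basis] using hi
  rw [this]; exact h

lemma basis_self (k : Fin K) : basis k k = true := by simp [basis]

lemma basis_ne {i k : Fin K} (h : i ≠ k) : basis k i = false := by simp [basis, h]

lemma exists_true_of_ne_allZero {α : Fin K → Bool} (h : α ≠ allZero K) : ∃ ν, α ν = true := by
  by_contra hc
  push_neg at hc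
  exact h (funext fun ν => by
    have := hc ν
    simp [allZero]
    exact Bool.eq_false_iff.2 (by simpa using this))

section generic
variable {Q : Fin J → Fin K → Bool} {th : Fin J → (Fin K → Bool) → ℝ}

lemma top_of (hR1 : R1 Q th) {j : Fin J} {k : Fin K} (hQ : Q j = basis k)
    {α : Fin K → Bool} (hα : α k = true) : th j α = th j (allOne K) :=
  (hR1 j).1 α (allOne K) (by rw [hQ]; exact dom_basis hα) (by rw [hQ]; exact dom_allOne _)

lemma lt_top (hR2 : R2 Q th) {j : Fin J} {k : Fin K} (hQ : Q j = basis k)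
    {α : Fin K → Bool} (hα : α k = false) : th j α < th j (allOne K) :=
  hR2 k j hQ α hα

lemma ge_bot (hR1 : R1 Q th) (j : Fin J) (α : Fin K → Bool) : th j (allZero K) ≤ th j α :=
  (hR1 j).2.2 α

lemma le_top (hR1 : R1 Q th) (j : Fin J) (α : Fin K → Bool) : th j α ≤ th j (allOne K) :=
  (hR1 j).2.1 (allOne K) α (by exact dom_allOne _)

end generic

namespace Ctx

variable (c : Ctx J K)

def lo1 (k : Fin K) : ℝ := c.th (c.i1 k) (allZero K)
def hi1 (k : Fin K) : ℝ := c.th (c.i1 k) (allOne K)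
def lo2 (k : Fin K) : ℝ := c.th (c.i2 k) (allZero K)
def hi2 (k : Fin K) : ℝ := c.th (c.i2 k) (allOne K)
def blo1 (k : Fin K) : ℝ := c.thb (c.i1 k) (allZero K)
def bhi1 (k : Fin K) : ℝ := c.thb (c.i1 k) (allOne K)
def blo2 (k : Fin K) : ℝ := c.thb (c.i2 k) (allZero K)
def bhi2 (k : Fin K) : ℝ := c.thb (c.i2 k) (allOne K)

lemma top1 {k : Fin K} {α : Fin K → Bool} (h : α k = true) : c.th (c.i1 k) α = c.hi1 k :=
  top_of c.hR1 (c.Q_i1 k) h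
lemma top2 {k : Fin K} {α : Fin K → Bool} (h : α k = true) : c.th (c.i2 k) α = c.hi2 k :=
  top_of c.hR1 (c.Q_i2 k) h
lemma btop1 {k : Fin K} {α : Fin K → Bool} (h : α k = true) : c.thb (c.i1 k) α = c.bhi1 k :=
  top_of c.hR1b (c.Q_i1 k) h
lemma btop2 {k : Fin K} {α : Fin K → Bool} (h : α k = true) : c.thb (c.i2 k) α = c.bhi2 k :=
  top_of c.hR1b (c.Q_i2 k) h

lemma lt1 {k : Fin K} {α : Fin K → Bool} (h : α k = false) : c.th (c.i1 k) α < c.hi1 k :=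
  lt_top c.hR2 (c.Q_i1 k) h
lemma lt2 {k : Fin K} {α : Fin K → Bool} (h : α k = false) : c.th (c.i2 k) α < c.hi2 k :=
  lt_top c.hR2 (c.Q_i2 k) h
lemma blt1 {k : Fin K} {α : Fin K → Bool} (h : α k = false) : c.thb (c.i1 k) α < c.bhi1 k :=
  lt_top c.hR2b (c.Q_i1 k) h
lemma blt2 {k : Fin K} {α : Fin K → Bool} (h : α k = false) : c.thb (c.i2 k) α < c.bhi2 k :=
  lt_top c.hR2b (c.Q_i2 k) h

lemma lo1_lt_hi1 (k : Fin K) : c.lo1 k < c.hi1 k := c.lt1 rfl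
lemma lo2_lt_hi2 (k : Fin K) : c.lo2 k < c.hi2 k := c.lt2 rfl
lemma blo1_lt_bhi1 (k : Fin K) : c.blo1 k < c.bhi1 k := c.blt1 rfl
lemma blo2_lt_bhi2 (k : Fin K) : c.blo2 k < c.bhi2 k := c.blt2 rfl

lemma p_pos (α : Fin K → Bool) : 0 < c.p α := (c.hp.1 α).1
lemma pb_pos (α : Fin K → Bool) : 0 < c.pb α := (c.hpb.1 α).1

/- kill helpers -/

lemma pf1_zero {g : Fin J → (Fin K → Bool) → ℝ} {m1 : Fin K → Bool} {x1 : Fin K → ℝ}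
    {α : Fin K → Bool} (ν : Fin K) (hm : m1 ν = true) (hz : g (c.i1 ν) α = x1 ν) :
    c.pf1 g m1 x1 α = 0 :=
  Finset.prod_eq_zero (Finset.mem_univ ν) (by rw [if_pos hm, hz, sub_self])

lemma pf2_zero {g : Fin J → (Fin K → Bool) → ℝ} {m2 : Fin K → Bool} {x2 : Fin K → ℝ}
    {α : Fin K → Bool} (ν : Fin K) (hm : m2 ν = true) (hz : g (c.i2 ν) α = x2 ν) :
    c.pf2 g m2 x2 α = 0 :=
  Finset.prod_eq_zero (Finset.mem_univ ν) (by rw [if_pos hm, hz, sub_self])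

lemma pfE_zero {g : Fin J → (Fin K → Bool) → ℝ} {mE : Fin J → Bool} {xE : Fin J → ℝ}
    {α : Fin K → Bool} (j : Fin J) (hj : 2 * K ≤ (j : ℕ)) (hm : mE j = true)
    (hz : g j α = xE j) : c.pfE g mE xE α = 0 :=
  Finset.prod_eq_zero (c.mem_RestS.2 hj) (by rw [if_pos hm, hz, sub_self])

lemma pf1_ne_zero {g : Fin J → (Fin K → Bool) → ℝ} {m1 : Fin K → Bool} {x1 : Fin K → ℝ}
    {α : Fin K → Bool} (h : ∀ ν, m1 ν = true → g (c.i1 ν) α ≠ x1 ν) :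
    c.pf1 g m1 x1 α ≠ 0 := by
  rw [pf1, Finset.prod_ne_zero_iff]
  intro ν _
  by_cases hm : m1 ν = true
  · rw [if_pos hm]; exact sub_ne_zero.2 (h ν hm)
  · rw [if_neg hm]; exact one_ne_zero

lemma pf2_ne_zero {g : Fin J → (Fin K → Bool) → ℝ} {m2 : Fin K → Bool} {x2 : Fin K → ℝ}
    {α : Fin K → Bool} (h : ∀ ν, m2 ν = true → g (c.i2 ν) α ≠ x2 ν) :
    c.pf2 g m2 x2 α ≠ 0 := by
  rw [pf2, Finset.prod_ne_zero_iff]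
  intro ν _
  by_cases hm : m2 ν = true
  · rw [if_pos hm]; exact sub_ne_zero.2 (h ν hm)
  · rw [if_neg hm]; exact one_ne_zero

lemma pfE_one {g : Fin J → (Fin K → Bool) → ℝ} {xE : Fin J → ℝ} (α : Fin K → Bool) :
    c.pfE g (fun _ => false) xE α = 1 := by
  rw [pfE]
  exact Finset.prod_eq_one fun j _ => by rw [if_neg (by simp)]

lemma pf1_single {g : Fin J → (Fin K → Bool) → ℝ} {x1 : Fin K → ℝ} (κ : Fin K)
    (α : Fin K → Bool) :
    c.pf1 g (fun ν => decide (ν = κ)) x1 α = g (c.i1 κ) α - x1 κ := by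
  rw [pf1]
  rw [Fintype.prod_eq_single κ (fun ν hν => by rw [if_neg (by simpa using hν)])]
  rw [if_pos (by simp)]

lemma pf2_single {g : Fin J → (Fin K → Bool) → ℝ} {x2 : Fin K → ℝ} (κ : Fin K)
    (α : Fin K → Bool) :
    c.pf2 g (fun ν => decide (ν = κ)) x2 α = g (c.i2 κ) α - x2 κ := by
  rw [pf2]
  rw [Fintype.prod_eq_single κ (fun ν hν => by rw [if_neg (by simpa using hν)])]
  rw [if_pos (by simp)]

lemma pfE_single {g : Fin J → (Fin K → Bool) → ℝ} {xE : Fin J → ℝ} (j0 : Fin J)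
    (hj0 : 2 * K ≤ (j0 : ℕ)) (α : Fin K → Bool) :
    c.pfE g (fun j => decide (j = j0)) xE α = g j0 α - xE j0 := by
  rw [pfE]
  rw [Finset.prod_eq_single_of_mem j0 (c.mem_RestS.2 hj0)
    (fun j _ hν => by rw [if_neg (by simpa using hν)])]
  rw [if_pos (by simp)]

end Ctx

/-- a sum over a fintype with only two nonvanishing entries -/
lemma sum_eq_pair {ι : Type*} [Fintype ι] [DecidableEq ι] (f : ι → ℝ) (a b : ι) (hab : a ≠ b)
    (h : ∀ x, x ≠ a → x ≠ b → f x = 0) : ∑ x, f x = f a + f b := by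
  rw [show (∑ x, f x) = ∑ x ∈ ({a, b} : Finset ι), f x from
    (Finset.sum_subset (Finset.subset_univ _) (fun x _ hx => by
      simp only [Finset.mem_insert, Finset.mem_singleton] at hx
      push_neg at hx
      exact h x hx.1 hx.2)).symm]
  exact Finset.sum_pair hab

end Step4Proof
namespace Step4Proof

variable {J K : ℕ}

namespace Ctx

variable (c : Ctx J K)

/-- the two-item instance of the fundamental identity -/
lemma two_item (ν : Fin K) (u v : ℝ) :
    ∑ α : Fin K → Bool, c.p α * ((c.th (c.i1 ν) α - u) * (c.th (c.i2 ν) α - v))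
  = ∑ α : Fin K → Bool, c.pb α * ((c.thb (c.i1 ν) α - u) * (c.thb (c.i2 ν) α - v)) := by
  have h := c.key (fun k => decide (k = ν)) (fun k => decide (k = ν))
    (fun _ => u) (fun _ => v) (fun _ => false) (fun _ => 0)
  simpa [c.pf1_single, c.pf2_single, c.pfE_one] using h

lemma posI (ν : Fin K) : ¬(c.lo1 ν = c.bhi1 ν ∧ c.lo2 ν = c.bhi2 ν) := by
  rintro ⟨h1, h2⟩
  have hid := c.two_item ν (c.bhi1 ν) (max (c.hi2 ν) (c.bhi2 ν))
  have hL : (∑ α : Fin K → Bool,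
      c.p α * ((c.th (c.i1 ν) α - c.bhi1 ν) * (c.th (c.i2 ν) α - max (c.hi2 ν) (c.bhi2 ν)))) ≤ 0 := by
    apply Finset.sum_nonpos
    intro α _
    apply mul_nonpos_iff.2
    left
    refine ⟨le_of_lt (c.p_pos α), ?_⟩
    apply mul_nonpos_iff.2
    left
    constructor
    · rw [← h1]
      exact sub_nonneg.2 (ge_bot c.hR1 (c.i1 ν) α)
    · exact sub_nonpos.2 (le_trans (le_top c.hR1 (c.i2 ν) α) (le_max_left _ _))
  have hR : 0 < ∑ α : Fin K → Bool,
      c.pb α * ((c.thb (c.i1 ν) α - c.bhi1 ν) * (c.thb (c.i2 ν) α - max (c.hi2 ν) (c.bhi2 ν))) := by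
    apply Finset.sum_pos'
    · intro α _
      apply mul_nonneg (le_of_lt (c.pb_pos α))
      exact mul_nonneg_iff.2 (Or.inr ⟨sub_nonpos.2 (le_top c.hR1b (c.i1 ν) α),
        sub_nonpos.2 (le_trans (le_top c.hR1b (c.i2 ν) α) (le_max_right _ _))⟩)
    · refine ⟨allZero K, Finset.mem_univ _, ?_⟩
      apply mul_pos (c.pb_pos _)
      apply mul_pos_of_neg_of_neg
      · exact sub_neg.2 (c.blo1_lt_bhi1 ν)
      · exact sub_neg.2 (lt_of_lt_of_le (c.blo2_lt_bhi2 ν) (le_max_right _ _))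
  rw [hid] at hL
  linarith

lemma posII (ν : Fin K) : ¬(c.blo1 ν = c.hi1 ν ∧ c.blo2 ν = c.hi2 ν) := by
  rintro ⟨h1, h2⟩
  have hid := c.two_item ν (c.hi1 ν) (max (c.hi2 ν) (c.bhi2 ν))
  have hL : 0 < ∑ α : Fin K → Bool,
      c.p α * ((c.th (c.i1 ν) α - c.hi1 ν) * (c.th (c.i2 ν) α - max (c.hi2 ν) (c.bhi2 ν))) := by
    apply Finset.sum_pos'
    · intro α _
      apply mul_nonneg (le_of_lt (c.p_pos α))
      exact mul_nonneg_iff.2 (Or.inr ⟨sub_nonpos.2 (le_top c.hR1 (c.i1 ν) α),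
        sub_nonpos.2 (le_trans (le_top c.hR1 (c.i2 ν) α) (le_max_left _ _))⟩)
    · refine ⟨allZero K, Finset.mem_univ _, ?_⟩
      apply mul_pos (c.p_pos _)
      apply mul_pos_of_neg_of_neg
      · exact sub_neg.2 (c.lo1_lt_hi1 ν)
      · exact sub_neg.2 (lt_of_lt_of_le (c.lo2_lt_hi2 ν) (le_max_left _ _))
  have hR : (∑ α : Fin K → Bool,
      c.pb α * ((c.thb (c.i1 ν) α - c.hi1 ν) * (c.thb (c.i2 ν) α - max (c.hi2 ν) (c.bhi2 ν)))) ≤ 0 := by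
    apply Finset.sum_nonpos
    intro α _
    apply mul_nonpos_iff.2
    left
    refine ⟨le_of_lt (c.pb_pos α), ?_⟩
    apply mul_nonpos_iff.2
    left
    constructor
    · rw [← h1]
      exact sub_nonneg.2 (ge_bot c.hR1b (c.i1 ν) α)
    · exact sub_nonpos.2 (le_trans (le_top c.hR1b (c.i2 ν) α) (le_max_right _ _))
  rw [hid] at hL
  linarith

/-- typed kill shifts: `t = true` is "type 1" (item `i1` at bar-top, item `i2` at top),
`t = false` is "type 2" (item `i1` at top, `i2` at bar-top). -/
def tx (t : Fin K → Bool) (ν : Fin K) : ℝ := if t ν then c.bhi1 ν else c.hi1 ν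
def ty (t : Fin K → Bool) (ν : Fin K) : ℝ := if t ν then c.hi2 ν else c.bhi2 ν

/-- existence of an admissible type at each coordinate: all four `∅`-level factors nonzero. -/
lemma adm (ν : Fin K) : ∃ t : Bool,
    c.lo1 ν ≠ (if t then c.bhi1 ν else c.hi1 ν) ∧
    c.lo2 ν ≠ (if t then c.hi2 ν else c.bhi2 ν) ∧
    c.blo1 ν ≠ (if t then c.bhi1 ν else c.hi1 ν) ∧
    c.blo2 ν ≠ (if t then c.hi2 ν else c.bhi2 ν) := by
  by_cases hA1 : c.lo1 ν = c.bhi1 ν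
  · by_cases hB1 : c.lo2 ν = c.bhi2 ν
    · exact absurd ⟨hA1, hB1⟩ (c.posI ν)
    · -- use type 2; need blo1 ≠ hi1
      by_cases hB2 : c.blo1 ν = c.hi1 ν
      · -- lo1 = bhi1 and blo1 = hi1 : contradiction
        exfalso
        have h1 := c.lo1_lt_hi1 ν
        have h2 := c.blo1_lt_bhi1 ν
        rw [hB2] at h2
        rw [hA1] at h1
        linarith
      · exact ⟨false, by simpa using ⟨ne_of_lt (c.lo1_lt_hi1 ν), hB1, hB2,
          ne_of_lt (c.blo2_lt_bhi2 ν)⟩⟩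
  · by_cases hA2 : c.blo2 ν = c.hi2 ν
    · -- need type 2 : blo1 ≠ hi1 and lo2 ≠ bhi2
      by_cases hB1 : c.lo2 ν = c.bhi2 ν
      · exfalso
        have h1 := c.lo2_lt_hi2 ν
        have h2 := c.blo2_lt_bhi2 ν
        rw [← hB1] at h2
        rw [← hA2] at h1
        linarith
      · by_cases hB2 : c.blo1 ν = c.hi1 ν
        · exact absurd ⟨hB2, hA2⟩ (c.posII ν)
        · exact ⟨false, by simpa using ⟨ne_of_lt (c.lo1_lt_hi1 ν), hB1, hB2,
            ne_of_lt (c.blo2_lt_bhi2 ν)⟩⟩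
    · exact ⟨true, by simpa using ⟨hA1, ne_of_lt (c.lo2_lt_hi2 ν),
        ne_of_lt (c.blo1_lt_bhi1 ν), hA2⟩⟩

/-- a globally admissible type vector -/
noncomputable def admT : Fin K → Bool := fun ν => Classical.choose (c.adm ν)

lemma admT_spec (ν : Fin K) :
    c.lo1 ν ≠ c.tx c.admT ν ∧ c.lo2 ν ≠ c.ty c.admT ν ∧
    c.blo1 ν ≠ c.tx c.admT ν ∧ c.blo2 ν ≠ c.ty c.admT ν := by
  have h := Classical.choose_spec (c.adm ν)
  exact h

end Ctx
end Step4Proof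
namespace Step4Proof

variable {J K : ℕ}

namespace Ctx

variable (c : Ctx J K)

/-- typed kill at a capable coordinate, non-bar model. -/
lemma kill_nb (t : Fin K → Bool) {m1 m2 : Fin K → Bool} {x1 x2 : Fin K → ℝ}
    {α : Fin K → Bool} (ν : Fin K) (hm1 : m1 ν = true) (hm2 : m2 ν = true)
    (hx1 : x1 ν = c.tx t ν) (hx2 : x2 ν = c.ty t ν) (hα : α ν = true) :
    c.pf1 c.th m1 x1 α * c.pf2 c.th m2 x2 α = 0 := by
  by_cases ht : t ν = true
  · refine mul_eq_zero.2 (Or.inr (c.pf2_zero ν hm2 ?_))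
    rw [c.top2 hα, hx2, ty, if_pos ht]
  · refine mul_eq_zero.2 (Or.inl (c.pf1_zero ν hm1 ?_))
    rw [c.top1 hα, hx1, tx, if_neg ht]

/-- typed kill at a capable coordinate, bar model. -/
lemma kill_b (t : Fin K → Bool) {m1 m2 : Fin K → Bool} {x1 x2 : Fin K → ℝ}
    {α : Fin K → Bool} (ν : Fin K) (hm1 : m1 ν = true) (hm2 : m2 ν = true)
    (hx1 : x1 ν = c.tx t ν) (hx2 : x2 ν = c.ty t ν) (hα : α ν = true) :
    c.pf1 c.thb m1 x1 α * c.pf2 c.thb m2 x2 α = 0 := by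
  by_cases ht : t ν = true
  · refine mul_eq_zero.2 (Or.inl (c.pf1_zero ν hm1 ?_))
    rw [c.btop1 hα, hx1, tx, if_pos ht]
  · refine mul_eq_zero.2 (Or.inr (c.pf2_zero ν hm2 ?_))
    rw [c.btop2 hα, hx2, ty, if_neg ht]

/-- isolation of the all-zero class via an admissible full typed kill. -/
lemma zero_iso (mE : Fin J → Bool) (xE : Fin J → ℝ) :
    c.p (allZero K) * (c.pf1 c.th (fun _ => true) (c.tx c.admT) (allZero K) *
        c.pf2 c.th (fun _ => true) (c.ty c.admT) (allZero K) *
        c.pfE c.th mE xE (allZero K))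
  = c.pb (allZero K) * (c.pf1 c.thb (fun _ => true) (c.tx c.admT) (allZero K) *
        c.pf2 c.thb (fun _ => true) (c.ty c.admT) (allZero K) *
        c.pfE c.thb mE xE (allZero K)) := by
  have h := c.key (fun _ => true) (fun _ => true) (c.tx c.admT) (c.ty c.admT) mE xE
  rw [Fintype.sum_eq_single (allZero K) (fun α hα => ?_),
      Fintype.sum_eq_single (allZero K) (fun α hα => ?_)] at h
  · exact h
  · obtain ⟨ν, hν⟩ := exists_true_of_ne_allZero hα
    rw [c.kill_b c.admT ν rfl rfl rfl rfl hν, zero_mul, mul_zero]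
  · obtain ⟨ν, hν⟩ := exists_true_of_ne_allZero hα
    rw [c.kill_nb c.admT ν rfl rfl rfl rfl hν, zero_mul, mul_zero]

/-- the nonvanishing base weight at `∅`. -/
lemma zero_iso_base_ne :
    c.p (allZero K) * (c.pf1 c.th (fun _ => true) (c.tx c.admT) (allZero K) *
        c.pf2 c.th (fun _ => true) (c.ty c.admT) (allZero K)) ≠ 0 := by
  refine mul_ne_zero (ne_of_gt (c.p_pos _)) (mul_ne_zero ?_ ?_)
  · exact c.pf1_ne_zero fun ν _ => (c.admT_spec ν).1
  · exact c.pf2_ne_zero fun ν _ => (c.admT_spec ν).2.1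

/-- Matching of the extra items' parameters at the all-zero class. -/
lemma extra_lo_eq {j0 : Fin J} (hj0 : 2 * K ≤ (j0 : ℕ)) :
    c.th j0 (allZero K) = c.thb j0 (allZero K) := by
  have h0 := c.zero_iso (fun _ => false) (fun _ => 0)
  rw [c.pfE_one, c.pfE_one, mul_one, mul_one] at h0
  have h1 := c.zero_iso (fun j => decide (j = j0)) (fun _ => 0)
  rw [c.pfE_single j0 hj0, c.pfE_single j0 hj0, sub_zero, sub_zero] at h1
  have hne := c.zero_iso_base_ne
  set A := c.p (allZero K) * (c.pf1 c.th (fun _ => true) (c.tx c.admT) (allZero K) *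
      c.pf2 c.th (fun _ => true) (c.ty c.admT) (allZero K)) with hA
  set B := c.pb (allZero K) * (c.pf1 c.thb (fun _ => true) (c.tx c.admT) (allZero K) *
      c.pf2 c.thb (fun _ => true) (c.ty c.admT) (allZero K)) with hB
  have e0 : A = B := by rw [hA, hB]; linear_combination h0
  have e1 : A * c.th j0 (allZero K) = B * c.thb j0 (allZero K) := by
    rw [hA, hB]; linear_combination h1
  rw [← e0] at e1
  exact mul_left_cancel₀ hne e1

end Ctx
end Step4Proof
namespace Step4Proof

variable {J K : ℕ}

lemma off_false {κ : Fin K} {α : Fin K → Bool} (hex : ¬∃ ν, ν ≠ κ ∧ α ν = true) :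
    ∀ ν, ν ≠ κ → α ν = false := by
  push_neg at hex
  intro ν hν
  simpa using hex ν hν

lemma classify_basis {κ : Fin K} {α : Fin K → Bool} (h : ∀ ν, ν ≠ κ → α ν = false) :
    α = allZero K ∨ α = basis κ := by
  by_cases hκ : α κ = true
  · right
    funext ν
    by_cases hν : ν = κ
    · rw [hν, basis_self, hκ]
    · rw [h ν hν, basis_ne hν]
  · left
    funext ν
    by_cases hν : ν = κ
    · rw [hν]; simpa [allZero] using hκ
    · exact h ν hν

namespace Ctx

variable (c : Ctx J K)

/-- A (pair-)tie of a coordinate `ν` at a class `β` not containing it. -/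
def Tie (β : Fin K → Bool) : Prop :=
  ∃ ν, β ν = false ∧ c.th (c.i1 ν) β = c.bhi1 ν ∧ c.th (c.i2 ν) β = c.bhi2 ν

/-- T1 : a coordinate whose top parameters differ between the two models
forces a pair-tie at its basis class. -/
lemma tie_basis (κ : Fin K) (hD : c.hi1 κ ≠ c.bhi1 κ ∨ c.hi2 κ ≠ c.bhi2 κ) :
    c.Tie (basis κ) := by
  classical
  by_contra hTie
  obtain ⟨js, hjs, hd⟩ := c.hC2 κ
  set t : Fin K → Bool := fun ν => decide (c.th (c.i1 ν) (basis κ) ≠ c.bhi1 ν) with ht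
  have ht_true : ∀ ν, t ν = true → c.th (c.i1 ν) (basis κ) ≠ c.bhi1 ν := by
    intro ν h; simpa [ht] using h
  have ht_false : ∀ ν, t ν ≠ true → c.th (c.i1 ν) (basis κ) = c.bhi1 ν := by
    intro ν h; simpa [ht] using h
  have hbκ : (basis κ) κ = true := basis_self κ
  have hbν : ∀ ν, ν ≠ κ → (basis κ) ν = false := fun ν h => basis_ne h
  rcases hD with hD1 | hD2
  · -- free factor : item `i1 κ` with shift `bhi1 κ`
    set x1 : Fin K → ℝ := fun ν => if ν = κ then c.bhi1 κ else c.tx t ν with hx1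
    have h := c.key (fun _ => true) (fun ν => decide (ν ≠ κ)) x1 (c.ty t)
        (fun j => decide (j = js)) (fun _ => c.th js (allZero K))
    rw [Fintype.sum_eq_single (basis κ) (fun α hα => ?_)] at h
    rw [Finset.sum_eq_zero (fun α _ => ?_)] at h
    · refine absurd h (mul_ne_zero (ne_of_gt (c.p_pos _)) (mul_ne_zero (mul_ne_zero ?_ ?_) ?_))
      · refine c.pf1_ne_zero fun ν _ => ?_
        simp only [hx1]
        by_cases hν : ν = κ
        · rw [if_pos hν, hν, c.top1 hbκ]
          exact hD1
        · rw [if_neg hν]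
          by_cases htν : t ν = true
          · rw [tx, if_pos htν]
            exact ht_true ν htν
          · rw [tx, if_neg htν]
            exact ne_of_lt (c.lt1 (hbν ν hν))
      · refine c.pf2_ne_zero fun ν hm => ?_
        have hνκ : ν ≠ κ := by simpa using hm
        by_cases htν : t ν = true
        · rw [ty, if_pos htν]
          exact ne_of_lt (c.lt2 (hbν ν hνκ))
        · rw [ty, if_neg htν]
          intro h2
          exact hTie ⟨ν, hbν ν hνκ, ht_false ν htν, h2⟩
      · rw [c.pfE_single js hjs]
        exact sub_ne_zero.2 hd
    · -- bar side : every class dies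
      by_cases hex : ∃ ν, ν ≠ κ ∧ α ν = true
      · obtain ⟨ν, hν, hαν⟩ := hex
        rw [c.kill_b t ν rfl (by simpa using hν) (by simp only [hx1]; rw [if_neg hν]) rfl hαν,
          zero_mul, mul_zero]
      · rcases classify_basis (off_false hex) with h0 | hκ'
        · rw [h0, c.pfE_zero js hjs (by simp) (c.extra_lo_eq hjs).symm, mul_zero, mul_zero]
        · rw [hκ', c.pf1_zero κ rfl (by rw [c.btop1 hbκ]; simp only [hx1]; simp),
            zero_mul, zero_mul, mul_zero]
    · -- non-bar side : only `basis κ` survives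
      by_cases hex : ∃ ν, ν ≠ κ ∧ α ν = true
      · obtain ⟨ν, hν, hαν⟩ := hex
        rw [c.kill_nb t ν rfl (by simpa using hν) (by simp only [hx1]; rw [if_neg hν]) rfl hαν,
          zero_mul, mul_zero]
      · rcases classify_basis (off_false hex) with h0 | hκ'
        · rw [h0, c.pfE_zero js hjs (by simp) rfl, mul_zero, mul_zero]
        · exact absurd hκ' hα
  · -- symmetric : free factor at item `i2 κ` with shift `bhi2 κ`
    set x2 : Fin K → ℝ := fun ν => if ν = κ then c.bhi2 κ else c.ty t ν with hx2
    have h := c.key (fun ν => decide (ν ≠ κ)) (fun _ => true) (c.tx t) x2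
        (fun j => decide (j = js)) (fun _ => c.th js (allZero K))
    rw [Fintype.sum_eq_single (basis κ) (fun α hα => ?_)] at h
    rw [Finset.sum_eq_zero (fun α _ => ?_)] at h
    · refine absurd h (mul_ne_zero (ne_of_gt (c.p_pos _)) (mul_ne_zero (mul_ne_zero ?_ ?_) ?_))
      · refine c.pf1_ne_zero fun ν hm => ?_
        have hνκ : ν ≠ κ := by simpa using hm
        by_cases htν : t ν = true
        · rw [tx, if_pos htν]
          exact ht_true ν htν
        · rw [tx, if_neg htν]
          exact ne_of_lt (c.lt1 (hbν ν hνκ))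
      · refine c.pf2_ne_zero fun ν _ => ?_
        simp only [hx2]
        by_cases hν : ν = κ
        · rw [if_pos hν, hν, c.top2 hbκ]
          exact hD2
        · rw [if_neg hν]
          by_cases htν : t ν = true
          · rw [ty, if_pos htν]
            exact ne_of_lt (c.lt2 (hbν ν hν))
          · rw [ty, if_neg htν]
            intro h2
            exact hTie ⟨ν, hbν ν hν, ht_false ν htν, h2⟩
      · rw [c.pfE_single js hjs]
        exact sub_ne_zero.2 hd
    · by_cases hex : ∃ ν, ν ≠ κ ∧ α ν = true
      · obtain ⟨ν, hν, hαν⟩ := hex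
        rw [c.kill_b t ν (by simpa using hν) rfl rfl (by simp only [hx2]; rw [if_neg hν]) hαν,
          zero_mul, mul_zero]
      · rcases classify_basis (off_false hex) with h0 | hκ'
        · rw [h0, c.pfE_zero js hjs (by simp) (c.extra_lo_eq hjs).symm, mul_zero, mul_zero]
        · rw [hκ', c.pf2_zero κ rfl (by rw [c.btop2 hbκ]; simp only [hx2]; simp),
            mul_zero, zero_mul, mul_zero]
    · by_cases hex : ∃ ν, ν ≠ κ ∧ α ν = true
      · obtain ⟨ν, hν, hαν⟩ := hex
        rw [c.kill_nb t ν (by simpa using hν) rfl rfl (by simp only [hx2]; rw [if_neg hν]) hαν,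
          zero_mul, mul_zero]
      · rcases classify_basis (off_false hex) with h0 | hκ'
        · rw [h0, c.pfE_zero js hjs (by simp) rfl, mul_zero, mul_zero]
        · exact absurd hκ' hα

end Ctx
end Step4Proof
namespace Step4Proof

variable {J K : ℕ}

lemma allZero_ne_basis (κ : Fin K) : allZero K ≠ basis κ := by
  intro h
  have := congrFun h κ
  rw [basis_self] at this
  exact Bool.noConfusion this

namespace Ctx

variable (c : Ctx J K)

/-- product over coordinates other than `κ`, first block -/
def eP1 (g : Fin J → (Fin K → Bool) → ℝ) (κ : Fin K) (w : Fin K → ℝ) (α : Fin K → Bool) : ℝ :=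
  ∏ ν ∈ univ.erase κ, (g (c.i1 ν) α - w ν)

def eP2 (g : Fin J → (Fin K → Bool) → ℝ) (κ : Fin K) (w : Fin K → ℝ) (α : Fin K → Bool) : ℝ :=
  ∏ ν ∈ univ.erase κ, (g (c.i2 ν) α - w ν)

lemma pf1_full_eval (g : Fin J → (Fin K → Bool) → ℝ) (κ : Fin K) (u : ℝ) (w : Fin K → ℝ)
    (α : Fin K → Bool) :
    c.pf1 g (fun _ => true) (fun ν => if ν = κ then u else w ν) α
      = (g (c.i1 κ) α - u) * c.eP1 g κ w α := by
  rw [pf1]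
  rw [show (∏ ν, (if true then g (c.i1 ν) α - (if ν = κ then u else w ν) else 1))
      = ∏ ν, (g (c.i1 ν) α - (if ν = κ then u else w ν)) from
    Finset.prod_congr rfl fun ν _ => if_pos rfl]
  rw [← Finset.mul_prod_erase _ _ (Finset.mem_univ κ), if_pos rfl]
  congr 1
  refine Finset.prod_congr rfl fun ν hν => ?_
  rw [if_neg (Finset.mem_erase.1 hν).1]

lemma pf2_full_eval (g : Fin J → (Fin K → Bool) → ℝ) (κ : Fin K) (u : ℝ) (w : Fin K → ℝ)
    (α : Fin K → Bool) :
    c.pf2 g (fun _ => true) (fun ν => if ν = κ then u else w ν) α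
      = (g (c.i2 κ) α - u) * c.eP2 g κ w α := by
  rw [pf2]
  rw [show (∏ ν, (if true then g (c.i2 ν) α - (if ν = κ then u else w ν) else 1))
      = ∏ ν, (g (c.i2 ν) α - (if ν = κ then u else w ν)) from
    Finset.prod_congr rfl fun ν _ => if_pos rfl]
  rw [← Finset.mul_prod_erase _ _ (Finset.mem_univ κ), if_pos rfl]
  congr 1
  refine Finset.prod_congr rfl fun ν hν => ?_
  rw [if_neg (Finset.mem_erase.1 hν).1]

lemma pf1_mask_eval (g : Fin J → (Fin K → Bool) → ℝ) (κ : Fin K) (w : Fin K → ℝ)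
    (α : Fin K → Bool) :
    c.pf1 g (fun ν => decide (ν ≠ κ)) w α = c.eP1 g κ w α := by
  rw [pf1, ← Finset.mul_prod_erase _ _ (Finset.mem_univ κ)]
  rw [if_neg (by simp), one_mul]
  refine Finset.prod_congr rfl fun ν hν => ?_
  rw [if_pos (by simpa using (Finset.mem_erase.1 hν).1)]

lemma pf2_mask_eval (g : Fin J → (Fin K → Bool) → ℝ) (κ : Fin K) (w : Fin K → ℝ)
    (α : Fin K → Bool) :
    c.pf2 g (fun ν => decide (ν ≠ κ)) w α = c.eP2 g κ w α := by
  rw [pf2, ← Finset.mul_prod_erase _ _ (Finset.mem_univ κ)]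
  rw [if_neg (by simp), one_mul]
  refine Finset.prod_congr rfl fun ν hν => ?_
  rw [if_pos (by simpa using (Finset.mem_erase.1 hν).1)]

lemma eP1_ne_zero {g : Fin J → (Fin K → Bool) → ℝ} {κ : Fin K} {w : Fin K → ℝ}
    {α : Fin K → Bool} (h : ∀ ν, ν ≠ κ → g (c.i1 ν) α ≠ w ν) : c.eP1 g κ w α ≠ 0 := by
  rw [eP1, Finset.prod_ne_zero_iff]
  exact fun ν hν => sub_ne_zero.2 (h ν (Finset.mem_erase.1 hν).1)

lemma eP2_ne_zero {g : Fin J → (Fin K → Bool) → ℝ} {κ : Fin K} {w : Fin K → ℝ}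
    {α : Fin K → Bool} (h : ∀ ν, ν ≠ κ → g (c.i2 ν) α ≠ w ν) : c.eP2 g κ w α ≠ 0 := by
  rw [eP2, Finset.prod_ne_zero_iff]
  exact fun ν hν => sub_ne_zero.2 (h ν (Finset.mem_erase.1 hν).1)

/-- L4 : the all-zero parameters of the two models agree at every structural item. -/
lemma minima (κ : Fin K) : c.lo1 κ = c.blo1 κ ∧ c.lo2 κ = c.blo2 κ := by
  classical
  set T := c.admT with hTdef
  have hbκ : (basis κ) κ = true := basis_self κ
  by_cases hEq : c.hi1 κ = c.bhi1 κ ∧ c.hi2 κ = c.bhi2 κ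
  · constructor
    · have h := c.key (fun _ => true) (fun _ => true)
        (fun ν => if ν = κ then c.blo1 κ else c.tx T ν)
        (fun ν => if ν = κ then c.hi2 κ else c.ty T ν) (fun _ => false) (fun _ => 0)
      rw [Fintype.sum_eq_single (allZero K) (fun α hα => ?_),
          Finset.sum_eq_zero (fun α _ => ?_)] at h
      · rw [c.pfE_one, mul_one, c.pf1_full_eval, c.pf2_full_eval] at h
        have h1 : (c.lo1 κ - c.blo1 κ) = 0 := by
          rcases mul_eq_zero.1 h with h' | h'
          · exact absurd h' (ne_of_gt (c.p_pos _))
          rcases mul_eq_zero.1 h' with h' | h'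
          · rcases mul_eq_zero.1 h' with h' | h'
            · exact h'
            · exact absurd h' (c.eP1_ne_zero fun ν hν => (c.admT_spec ν).1)
          rcases mul_eq_zero.1 h' with h' | h'
          · exact absurd h' (sub_ne_zero.2 (ne_of_lt (c.lo2_lt_hi2 κ)))
          · exact absurd h' (c.eP2_ne_zero fun ν hν => (c.admT_spec ν).2.1)
        linarith [sub_eq_zero.1 h1]
      · by_cases hex : ∃ ν, ν ≠ κ ∧ α ν = true
        · obtain ⟨ν, hν, hαν⟩ := hex
          rw [c.kill_b T ν rfl rfl (by simp only [if_neg hν]) (by simp only [if_neg hν]) hαν,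
            zero_mul, mul_zero]
        · rcases classify_basis (off_false hex) with h0 | hκ'
          · rw [h0, c.pf1_zero κ rfl (by rw [if_pos rfl]; rfl), zero_mul, zero_mul, mul_zero]
          · rw [hκ', c.pf2_zero κ rfl (by rw [if_pos rfl, c.btop2 hbκ, ← hEq.2]),
              mul_zero, zero_mul, mul_zero]
      · by_cases hex : ∃ ν, ν ≠ κ ∧ α ν = true
        · obtain ⟨ν, hν, hαν⟩ := hex
          rw [c.kill_nb T ν rfl rfl (by simp only [if_neg hν]) (by simp only [if_neg hν]) hαν,
            zero_mul, mul_zero]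
        · rcases classify_basis (off_false hex) with h0 | hκ'
          · exact absurd h0 hα
          · rw [hκ', c.pf2_zero κ rfl (by rw [if_pos rfl, c.top2 hbκ]),
              mul_zero, zero_mul, mul_zero]
    · have h := c.key (fun _ => true) (fun _ => true)
        (fun ν => if ν = κ then c.hi1 κ else c.tx T ν)
        (fun ν => if ν = κ then c.blo2 κ else c.ty T ν) (fun _ => false) (fun _ => 0)
      rw [Fintype.sum_eq_single (allZero K) (fun α hα => ?_),
          Finset.sum_eq_zero (fun α _ => ?_)] at h
      · rw [c.pfE_one, mul_one, c.pf1_full_eval, c.pf2_full_eval] at h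
        have h1 : (c.lo2 κ - c.blo2 κ) = 0 := by
          rcases mul_eq_zero.1 h with h' | h'
          · exact absurd h' (ne_of_gt (c.p_pos _))
          rcases mul_eq_zero.1 h' with h' | h'
          · rcases mul_eq_zero.1 h' with h' | h'
            · exact absurd h' (sub_ne_zero.2 (ne_of_lt (c.lo1_lt_hi1 κ)))
            · exact absurd h' (c.eP1_ne_zero fun ν hν => (c.admT_spec ν).1)
          rcases mul_eq_zero.1 h' with h' | h'
          · exact h'
          · exact absurd h' (c.eP2_ne_zero fun ν hν => (c.admT_spec ν).2.1)
        linarith [sub_eq_zero.1 h1]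
      · by_cases hex : ∃ ν, ν ≠ κ ∧ α ν = true
        · obtain ⟨ν, hν, hαν⟩ := hex
          rw [c.kill_b T ν rfl rfl (by simp only [if_neg hν]) (by simp only [if_neg hν]) hαν,
            zero_mul, mul_zero]
        · rcases classify_basis (off_false hex) with h0 | hκ'
          · rw [h0, c.pf2_zero κ rfl (by rw [if_pos rfl]; rfl), mul_zero, zero_mul, mul_zero]
          · rw [hκ', c.pf1_zero κ rfl (by rw [if_pos rfl, c.btop1 hbκ, ← hEq.1]),
              zero_mul, zero_mul, mul_zero]
      · by_cases hex : ∃ ν, ν ≠ κ ∧ α ν = true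
        · obtain ⟨ν, hν, hαν⟩ := hex
          rw [c.kill_nb T ν rfl rfl (by simp only [if_neg hν]) (by simp only [if_neg hν]) hαν,
            zero_mul, mul_zero]
        · rcases classify_basis (off_false hex) with h0 | hκ'
          · exact absurd h0 hα
          · rw [hκ', c.pf1_zero κ rfl (by rw [if_pos rfl, c.top1 hbκ]),
              zero_mul, zero_mul, mul_zero]
  · -- tops differ at κ : use the tie produced by T1
    have hD : c.hi1 κ ≠ c.bhi1 κ ∨ c.hi2 κ ≠ c.bhi2 κ := by
      rcases not_and_or.1 hEq with h | h
      exacts [Or.inl h, Or.inr h]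
    obtain ⟨ν₀, hb0, tie1, tie2⟩ := c.tie_basis κ hD
    have hν₀κ : ν₀ ≠ κ := by
      intro h; rw [h, basis_self] at hb0; exact Bool.noConfusion hb0
    have tieKill : ∀ {m1 m2 : Fin K → Bool} {x1 x2 : Fin K → ℝ},
        m1 ν₀ = true → m2 ν₀ = true → x1 ν₀ = c.tx T ν₀ → x2 ν₀ = c.ty T ν₀ →
        c.pf1 c.th m1 x1 (basis κ) * c.pf2 c.th m2 x2 (basis κ) = 0 := by
      intro m1 m2 x1 x2 hm1 hm2 hx1 hx2
      by_cases ht : T ν₀ = true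
      · exact mul_eq_zero.2 (Or.inl (c.pf1_zero ν₀ hm1 (by rw [tie1, hx1, hTdef, tx, if_pos ht])))
      · exact mul_eq_zero.2 (Or.inr (c.pf2_zero ν₀ hm2 (by rw [tie2, hx2, hTdef, ty, if_neg ht])))
    -- eq1
    have h1 := c.key (fun _ => true) (fun _ => true)
      (fun ν => if ν = κ then c.blo1 κ else c.tx T ν)
      (fun ν => if ν = κ then c.bhi2 κ else c.ty T ν) (fun _ => false) (fun _ => 0)
    rw [Fintype.sum_eq_single (allZero K) (fun α hα => ?_),
        Finset.sum_eq_zero (fun α _ => ?_)] at h1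
    rotate_left
    · by_cases hex : ∃ ν, ν ≠ κ ∧ α ν = true
      · obtain ⟨ν, hν, hαν⟩ := hex
        rw [c.kill_b T ν rfl rfl (by simp only [if_neg hν]) (by simp only [if_neg hν]) hαν,
          zero_mul, mul_zero]
      · rcases classify_basis (off_false hex) with h0 | hκ'
        · rw [h0, c.pf1_zero κ rfl (by rw [if_pos rfl]; rfl), zero_mul, zero_mul, mul_zero]
        · rw [hκ', c.pf2_zero κ rfl (by rw [if_pos rfl, c.btop2 hbκ]),
            mul_zero, zero_mul, mul_zero]
    · by_cases hex : ∃ ν, ν ≠ κ ∧ α ν = true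
      · obtain ⟨ν, hν, hαν⟩ := hex
        rw [c.kill_nb T ν rfl rfl (by simp only [if_neg hν]) (by simp only [if_neg hν]) hαν,
          zero_mul, mul_zero]
      · rcases classify_basis (off_false hex) with h0 | hκ'
        · exact absurd h0 hα
        · rw [hκ', tieKill rfl rfl (by simp only [if_neg hν₀κ]) (by simp only [if_neg hν₀κ]),
            zero_mul, mul_zero]
    rw [c.pfE_one, mul_one, c.pf1_full_eval, c.pf2_full_eval] at h1
    -- eq2
    have h2 := c.key (fun _ => true) (fun _ => true)
      (fun ν => if ν = κ then c.bhi1 κ else c.tx T ν)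
      (fun ν => if ν = κ then c.blo2 κ else c.ty T ν) (fun _ => false) (fun _ => 0)
    rw [Fintype.sum_eq_single (allZero K) (fun α hα => ?_),
        Finset.sum_eq_zero (fun α _ => ?_)] at h2
    rotate_left
    · by_cases hex : ∃ ν, ν ≠ κ ∧ α ν = true
      · obtain ⟨ν, hν, hαν⟩ := hex
        rw [c.kill_b T ν rfl rfl (by simp only [if_neg hν]) (by simp only [if_neg hν]) hαν,
          zero_mul, mul_zero]
      · rcases classify_basis (off_false hex) with h0 | hκ'
        · rw [h0, c.pf2_zero κ rfl (by rw [if_pos rfl]; rfl), mul_zero, zero_mul, mul_zero]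
        · rw [hκ', c.pf1_zero κ rfl (by rw [if_pos rfl, c.btop1 hbκ]),
            zero_mul, zero_mul, mul_zero]
    · by_cases hex : ∃ ν, ν ≠ κ ∧ α ν = true
      · obtain ⟨ν, hν, hαν⟩ := hex
        rw [c.kill_nb T ν rfl rfl (by simp only [if_neg hν]) (by simp only [if_neg hν]) hαν,
          zero_mul, mul_zero]
      · rcases classify_basis (off_false hex) with h0 | hκ'
        · exact absurd h0 hα
        · rw [hκ', tieKill rfl rfl (by simp only [if_neg hν₀κ]) (by simp only [if_neg hν₀κ]),
            zero_mul, mul_zero]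
    rw [c.pfE_one, mul_one, c.pf1_full_eval, c.pf2_full_eval] at h2
    -- extract disjunctions
    have hR1 : c.eP1 c.th κ (c.tx T) (allZero K) ≠ 0 :=
      c.eP1_ne_zero fun ν hν => (c.admT_spec ν).1
    have hR2 : c.eP2 c.th κ (c.ty T) (allZero K) ≠ 0 :=
      c.eP2_ne_zero fun ν hν => (c.admT_spec ν).2.1
    have d1 : c.lo1 κ = c.blo1 κ ∨ c.lo2 κ = c.bhi2 κ := by
      rcases mul_eq_zero.1 h1 with h' | h'
      · exact absurd h' (ne_of_gt (c.p_pos _))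
      rcases mul_eq_zero.1 h' with h' | h'
      · rcases mul_eq_zero.1 h' with h' | h'
        · exact Or.inl (by have := sub_eq_zero.1 h'; exact this)
        · exact absurd h' hR1
      rcases mul_eq_zero.1 h' with h' | h'
      · exact Or.inr (by have := sub_eq_zero.1 h'; exact this)
      · exact absurd h' hR2
    have d2 : c.lo1 κ = c.bhi1 κ ∨ c.lo2 κ = c.blo2 κ := by
      rcases mul_eq_zero.1 h2 with h' | h'
      · exact absurd h' (ne_of_gt (c.p_pos _))
      rcases mul_eq_zero.1 h' with h' | h'
      · rcases mul_eq_zero.1 h' with h' | h'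
        · exact Or.inl (by have := sub_eq_zero.1 h'; exact this)
        · exact absurd h' hR1
      rcases mul_eq_zero.1 h' with h' | h'
      · exact Or.inr (by have := sub_eq_zero.1 h'; exact this)
      · exact absurd h' hR2
    rcases d1 with d1 | d1 <;> rcases d2 with d2 | d2
    · -- lo1 = blo1 and lo1 = bhi1 : impossible
      exfalso
      have := c.blo1_lt_bhi1 κ
      rw [← d1, ← d2] at this
      exact lt_irrefl _ this
    · exact ⟨d1, d2⟩
    · -- hard case : lo2 = bhi2 and lo1 = bhi1
      exfalso
      -- eq3
      have h3 := c.key (fun _ => true) (fun _ => true)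
        (fun ν => if ν = κ then c.blo1 κ else c.tx T ν)
        (fun ν => if ν = κ then c.blo2 κ else c.ty T ν) (fun _ => false) (fun _ => 0)
      rw [Fintype.sum_eq_single (allZero K) (fun α hα => ?_),
          Fintype.sum_eq_single (basis κ) (fun α hα => ?_)] at h3
      rotate_left
      · by_cases hex : ∃ ν, ν ≠ κ ∧ α ν = true
        · obtain ⟨ν, hν, hαν⟩ := hex
          rw [c.kill_b T ν rfl rfl (by simp only [if_neg hν]) (by simp only [if_neg hν]) hαν,
            zero_mul, mul_zero]
        · rcases classify_basis (off_false hex) with h0 | hκ'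
          · rw [h0, c.pf1_zero κ rfl (by rw [if_pos rfl]; rfl), zero_mul, zero_mul, mul_zero]
          · exact absurd hκ' hα
      · by_cases hex : ∃ ν, ν ≠ κ ∧ α ν = true
        · obtain ⟨ν, hν, hαν⟩ := hex
          rw [c.kill_nb T ν rfl rfl (by simp only [if_neg hν]) (by simp only [if_neg hν]) hαν,
            zero_mul, mul_zero]
        · rcases classify_basis (off_false hex) with h0 | hκ'
          · exact absurd h0 hα
          · rw [hκ', tieKill rfl rfl (by simp only [if_neg hν₀κ]) (by simp only [if_neg hν₀κ]),
              zero_mul, mul_zero]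
      rw [c.pfE_one, c.pfE_one, mul_one, mul_one, c.pf1_full_eval, c.pf2_full_eval,
        c.pf1_full_eval, c.pf2_full_eval, c.btop1 hbκ, c.btop2 hbκ] at h3
      -- eq0
      have h0 := c.key (fun ν => decide (ν ≠ κ)) (fun ν => decide (ν ≠ κ))
        (c.tx T) (c.ty T) (fun _ => false) (fun _ => 0)
      rw [Fintype.sum_eq_single (allZero K) (fun α hα => ?_),
          sum_eq_pair _ (allZero K) (basis κ) (allZero_ne_basis κ) (fun α hα hα' => ?_)] at h0
      rotate_left
      · by_cases hex : ∃ ν, ν ≠ κ ∧ α ν = true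
        · obtain ⟨ν, hν, hαν⟩ := hex
          rw [c.kill_b T ν (by simpa using hν) (by simpa using hν) rfl rfl hαν,
            zero_mul, mul_zero]
        · rcases classify_basis (off_false hex) with h' | h'
          · exact absurd h' hα
          · exact absurd h' hα'
      · by_cases hex : ∃ ν, ν ≠ κ ∧ α ν = true
        · obtain ⟨ν, hν, hαν⟩ := hex
          rw [c.kill_nb T ν (by simpa using hν) (by simpa using hν) rfl rfl hαν,
            zero_mul, mul_zero]
        · rcases classify_basis (off_false hex) with h' | h'
          · exact absurd h' hα
          · rw [h', tieKill (by simpa using hν₀κ) (by simpa using hν₀κ) rfl rfl,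
              zero_mul, mul_zero]
      rw [c.pfE_one, c.pfE_one, c.pfE_one, mul_one, mul_one, mul_one,
        c.pf1_mask_eval, c.pf2_mask_eval, c.pf1_mask_eval, c.pf2_mask_eval,
        c.pf1_mask_eval, c.pf2_mask_eval] at h0
      -- algebra
      set A := c.eP1 c.th κ (c.tx T) (allZero K)
      set B := c.eP2 c.th κ (c.ty T) (allZero K)
      set Ab := c.eP1 c.thb κ (c.tx T) (allZero K)
      set Bb := c.eP2 c.thb κ (c.ty T) (allZero K)
      set Aκ := c.eP1 c.thb κ (c.tx T) (basis κ)
      set Bκ := c.eP2 c.thb κ (c.ty T) (basis κ)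
      have hβ1 : c.bhi1 κ - c.blo1 κ ≠ 0 := sub_ne_zero.2 (ne_of_gt (c.blo1_lt_bhi1 κ))
      have hβ2 : c.bhi2 κ - c.blo2 κ ≠ 0 := sub_ne_zero.2 (ne_of_gt (c.blo2_lt_bhi2 κ))
      -- from h3 : p∅ (lo1-blo1) A (lo2-blo2) B = p̄eκ (bhi1-blo1) Aκ (bhi2-blo2) Bκ
      have d1' : c.th (c.i2 κ) (allZero K) = c.bhi2 κ := d1
      have d2' : c.th (c.i1 κ) (allZero K) = c.bhi1 κ := d2
      have key3 : (c.bhi1 κ - c.blo1 κ) * ((c.bhi2 κ - c.blo2 κ) *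
          (c.p (allZero K) * (A * B) - c.pb (basis κ) * (Aκ * Bκ))) = 0 := by
        rw [d1', d2'] at h3
        linear_combination h3
      have key3' : c.p (allZero K) * (A * B) = c.pb (basis κ) * (Aκ * Bκ) := by
        rcases mul_eq_zero.1 key3 with h' | h'
        · exact absurd h' hβ1
        rcases mul_eq_zero.1 h' with h' | h'
        · exact absurd h' hβ2
        · linarith [sub_eq_zero.1 h']
      -- h0 : p∅ A B = p̄∅ Ab Bb + p̄eκ Aκ Bκ
      have hAb : Ab ≠ 0 := c.eP1_ne_zero fun ν hν => (c.admT_spec ν).2.2.1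
      have hBb : Bb ≠ 0 := c.eP2_ne_zero fun ν hν => (c.admT_spec ν).2.2.2
      have : c.pb (allZero K) * (Ab * Bb) = 0 := by linarith [key3', h0]
      rcases mul_eq_zero.1 this with h' | h'
      · exact absurd h' (ne_of_gt (c.pb_pos _))
      rcases mul_eq_zero.1 h' with h' | h'
      exacts [hAb h', hBb h']
    · exfalso
      have hlt := c.blo2_lt_bhi2 κ
      rw [← d2, ← d1] at hlt
      exact lt_irrefl _ hlt

end Ctx
end Step4Proof
namespace Step4Proof

variable {J K : ℕ}

/-- profile of a finite set of coordinates -/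
def prof (A : Finset (Fin K)) : Fin K → Bool := fun ν => decide (ν ∈ A)

lemma prof_mem {A : Finset (Fin K)} {ν : Fin K} (h : ν ∈ A) : prof A ν = true := by
  simp [prof, h]

lemma prof_not_mem {A : Finset (Fin K)} {ν : Fin K} (h : ν ∉ A) : prof A ν = false := by
  simp [prof, h]

lemma eq_prof_filter (α : Fin K → Bool) : α = prof (univ.filter (fun ν => α ν = true)) := by
  funext ν
  by_cases h : α ν = true
  · rw [h, prof_mem (by simp [h])]
  · rw [prof_not_mem (by simp [h]), Bool.eq_false_iff]
    exact h

namespace Ctx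

variable (c : Ctx J K)

/-- T2 : descent. If every proper nonempty subclass of `A` is tied, then `A` itself is tied. -/
lemma tie_step (A : Finset (Fin K)) (hne : A.Nonempty)
    (hsub : ∀ ν ∈ A, c.bhi1 ν < c.hi1 ν ∧ c.bhi2 ν < c.hi2 ν)
    (IH : ∀ B : Finset (Fin K), B ⊆ A → B.Nonempty → B ≠ A → c.Tie (prof B)) :
    c.Tie (prof A) := by
  classical
  by_contra hTie
  obtain ⟨ν₁, hν₁⟩ := hne
  set t : Fin K → Bool := fun ν => decide (c.th (c.i1 ν) (prof A) ≠ c.bhi1 ν) with htdef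
  have ht_true : ∀ ν, t ν = true → c.th (c.i1 ν) (prof A) ≠ c.bhi1 ν := by
    intro ν h; simpa [htdef] using h
  have ht_false : ∀ ν, t ν ≠ true → c.th (c.i1 ν) (prof A) = c.bhi1 ν := by
    intro ν h; simpa [htdef] using h
  have h := c.key (fun _ => true) (fun _ => true)
    (fun ν => if ν ∈ A then c.bhi1 ν else c.tx t ν)
    (fun ν => if ν ∈ A then c.lo2 ν else c.ty t ν) (fun _ => false) (fun _ => 0)
  rw [Fintype.sum_eq_single (prof A) (fun α hα => ?_),
      Finset.sum_eq_zero (fun α _ => ?_)] at h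
  · -- survivor is nonzero : contradiction
    rw [c.pfE_one, mul_one] at h
    refine absurd h (mul_ne_zero (ne_of_gt (c.p_pos _)) (mul_ne_zero ?_ ?_))
    · refine c.pf1_ne_zero fun ν _ => ?_
      by_cases hν : ν ∈ A
      · rw [if_pos hν, c.top1 (prof_mem hν)]
        exact ne_of_gt (hsub ν hν).1
      · rw [if_neg hν]
        by_cases htν : t ν = true
        · rw [tx, if_pos htν]
          exact ht_true ν htν
        · rw [tx, if_neg htν]
          exact ne_of_lt (c.lt1 (prof_not_mem hν))
    · refine c.pf2_ne_zero fun ν _ => ?_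
      by_cases hν : ν ∈ A
      · rw [if_pos hν, c.top2 (prof_mem hν)]
        exact (c.lo2_lt_hi2 ν).ne'
      · rw [if_neg hν]
        by_cases htν : t ν = true
        · rw [ty, if_pos htν]
          exact ne_of_lt (c.lt2 (prof_not_mem hν))
        · rw [ty, if_neg htν]
          intro h2
          exact hTie ⟨ν, prof_not_mem hν, ht_false ν htν, h2⟩
  · -- bar side : every class dies
    by_cases hex : ∃ ν, ν ∉ A ∧ α ν = true
    · obtain ⟨ν, hν, hαν⟩ := hex
      rw [c.kill_b t ν rfl rfl (by simp only [if_neg hν]) (by simp only [if_neg hν]) hαν,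
        zero_mul, mul_zero]
    · push_neg at hex
      by_cases h0 : α = allZero K
      · rw [h0, c.pf2_zero ν₁ rfl ?_, mul_zero, zero_mul, mul_zero]
        rw [if_pos hν₁]
        exact ((c.minima ν₁).2).symm
      · obtain ⟨μ, hμ⟩ := exists_true_of_ne_allZero h0
        have hμA : μ ∈ A := by
          by_contra hc
          exact hex μ hc hμ
        rw [c.pf1_zero μ rfl ?_, zero_mul, zero_mul, mul_zero]
        rw [if_pos hμA]
        exact c.btop1 hμ
  · -- non-bar : everything except `prof A` dies
    by_cases hex : ∃ ν, ν ∉ A ∧ α ν = true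
    · obtain ⟨ν, hν, hαν⟩ := hex
      rw [c.kill_nb t ν rfl rfl (by simp only [if_neg hν]) (by simp only [if_neg hν]) hαν,
        zero_mul, mul_zero]
    · push_neg at hex
      set B : Finset (Fin K) := univ.filter (fun ν => α ν = true) with hBdef
      have hαB : α = prof B := eq_prof_filter α
      have hBA : B ⊆ A := by
        intro ν hν
        rw [hBdef, Finset.mem_filter] at hν
        by_contra hc
        exact hex ν hc hν.2
      by_cases hB0 : B = ∅
      · -- α = allZero
        have h0 : α = allZero K := by
          funext ν
          have : α ν ≠ true := by
            intro hc
            have : ν ∈ B := by rw [hBdef, Finset.mem_filter]; exact ⟨Finset.mem_univ _, hc⟩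
            rw [hB0] at this
            exact absurd this (Finset.notMem_empty ν)
          simpa [allZero] using this
        rw [h0, c.pf2_zero ν₁ rfl ?_, mul_zero, zero_mul, mul_zero]
        rw [if_pos hν₁]
        rfl
      · have hBne : B ≠ A := by
          intro hc
          rw [hc] at hαB
          exact hα hαB
        obtain ⟨μ, hμfalse, t1, t2⟩ := IH B hBA (Finset.nonempty_of_ne_empty hB0) hBne
        rw [← hαB] at t1 t2
        by_cases hμA : μ ∈ A
        · rw [c.pf1_zero μ rfl ?_, zero_mul, zero_mul, mul_zero]
          rw [if_pos hμA]
          exact t1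
        · by_cases htμ : t μ = true
          · rw [c.pf1_zero μ rfl ?_, zero_mul, zero_mul, mul_zero]
            rw [if_neg hμA, tx, if_pos htμ]
            exact t1
          · rw [c.pf2_zero μ rfl ?_, mul_zero, zero_mul, mul_zero]
            rw [if_neg hμA, ty, if_neg htμ]
            exact t2

/-- every nonempty subset of the "bar-low" coordinates is tied -/
lemma tie_all : ∀ (n : ℕ) (A : Finset (Fin K)), A.card = n → A.Nonempty →
    (∀ ν ∈ A, c.bhi1 ν < c.hi1 ν ∧ c.bhi2 ν < c.hi2 ν) → c.Tie (prof A) := by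
  intro n
  induction n using Nat.strong_induction_on with
  | _ n IH =>
    intro A hcard hne hsub
    refine c.tie_step A hne hsub fun B hBA hBne hBneq => ?_
    have hlt : B.card < n := by
      rw [← hcard]
      exact Finset.card_lt_card (lt_of_le_of_ne hBA hBneq)
    exact IH B.card hlt B rfl hBne (fun ν hν => hsub ν (hBA hν))

/-- L5 : all top parameters agree. -/
lemma tops (κ : Fin K) : c.hi1 κ = c.bhi1 κ ∧ c.hi2 κ = c.bhi2 κ := by
  classical
  by_contra hEq
  have hD : c.hi1 κ ≠ c.bhi1 κ ∨ c.hi2 κ ≠ c.bhi2 κ := by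
    rcases not_and_or.1 hEq with h | h
    exacts [Or.inl h, Or.inr h]
  have tie_dir : ∀ {β : Fin K → Bool} {ν : Fin K}, β ν = false →
      c.th (c.i1 ν) β = c.bhi1 ν → c.th (c.i2 ν) β = c.bhi2 ν →
      (c.bhi1 ν < c.hi1 ν ∧ c.bhi2 ν < c.hi2 ν) := by
    intro β ν hβ t1 t2
    exact ⟨t1 ▸ c.lt1 hβ, t2 ▸ c.lt2 hβ⟩
  set Pb : Finset (Fin K) :=
    univ.filter (fun ν => c.bhi1 ν < c.hi1 ν ∧ c.bhi2 ν < c.hi2 ν) with hPbdef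
  have hPbne : Pb.Nonempty := by
    obtain ⟨ν₀, hb0, t1, t2⟩ := c.tie_basis κ hD
    exact ⟨ν₀, by rw [hPbdef, Finset.mem_filter]; exact ⟨Finset.mem_univ _, tie_dir hb0 t1 t2⟩⟩
  obtain ⟨μ, hμfalse, t1, t2⟩ := c.tie_all Pb.card Pb rfl hPbne
    (fun ν hν => (Finset.mem_filter.1 hν).2)
  have : μ ∈ Pb := by
    rw [hPbdef, Finset.mem_filter]
    exact ⟨Finset.mem_univ _, tie_dir hμfalse t1 t2⟩
  rw [prof_mem this] at hμfalse
  exact Bool.noConfusion hμfalse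

end Ctx
end Step4Proof
namespace Step4Proof

variable {J K : ℕ}

namespace Ctx

variable (c : Ctx J K)

lemma pf1_none {g : Fin J → (Fin K → Bool) → ℝ} {x : Fin K → ℝ} (α : Fin K → Bool) :
    c.pf1 g (fun _ => false) x α = 1 :=
  Finset.prod_eq_one fun ν _ => by rw [if_neg (by simp)]

lemma pf2_none {g : Fin J → (Fin K → Bool) → ℝ} {x : Fin K → ℝ} (α : Fin K → Bool) :
    c.pf2 g (fun _ => false) x α = 1 :=
  Finset.prod_eq_one fun ν _ => by rw [if_neg (by simp)]

/-- run A of step 3 : isolate `basis κ`, killing with the first identity block. -/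
lemma basis_iso1 (κ : Fin K) (m2 : Fin K → Bool) (x2 : Fin K → ℝ) (mE : Fin J → Bool)
    (xE : Fin J → ℝ) :
    c.p (basis κ) * (c.pf1 c.th (fun _ => true)
        (fun ν => if ν = κ then c.lo1 κ else c.hi1 ν) (basis κ) *
      c.pf2 c.th m2 x2 (basis κ) * c.pfE c.th mE xE (basis κ))
  = c.pb (basis κ) * (c.pf1 c.thb (fun _ => true)
        (fun ν => if ν = κ then c.lo1 κ else c.hi1 ν) (basis κ) *
      c.pf2 c.thb m2 x2 (basis κ) * c.pfE c.thb mE xE (basis κ)) := by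
  classical
  have h := c.key (fun _ => true) m2 (fun ν => if ν = κ then c.lo1 κ else c.hi1 ν) x2 mE xE
  rw [Fintype.sum_eq_single (basis κ) (fun α hα => ?_),
      Fintype.sum_eq_single (basis κ) (fun α hα => ?_)] at h
  · exact h
  · -- bar side kills
    by_cases hex : ∃ ν, ν ≠ κ ∧ α ν = true
    · obtain ⟨ν, hν, hαν⟩ := hex
      rw [c.pf1_zero ν rfl (by rw [if_neg hν, c.btop1 hαν, ← (c.tops ν).1]), zero_mul,
        zero_mul, mul_zero]
    · rcases classify_basis (off_false hex) with h0 | hκ'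
      · rw [h0, c.pf1_zero κ rfl (by rw [if_pos rfl]; exact ((c.minima κ).1).symm), zero_mul,
          zero_mul, mul_zero]
      · exact absurd hκ' hα
  · by_cases hex : ∃ ν, ν ≠ κ ∧ α ν = true
    · obtain ⟨ν, hν, hαν⟩ := hex
      rw [c.pf1_zero ν rfl (by rw [if_neg hν]; exact c.top1 hαν), zero_mul, zero_mul, mul_zero]
    · rcases classify_basis (off_false hex) with h0 | hκ'
      · rw [h0, c.pf1_zero κ rfl (by rw [if_pos rfl]; rfl), zero_mul, zero_mul, mul_zero]
      · exact absurd hκ' hα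

/-- run B of step 3 : isolate `basis κ`, killing with the second identity block. -/
lemma basis_iso2 (κ : Fin K) (m1 : Fin K → Bool) (x1 : Fin K → ℝ) (mE : Fin J → Bool)
    (xE : Fin J → ℝ) :
    c.p (basis κ) * (c.pf1 c.th m1 x1 (basis κ) * (c.pf2 c.th (fun _ => true)
        (fun ν => if ν = κ then c.lo2 κ else c.hi2 ν) (basis κ)) *
      c.pfE c.th mE xE (basis κ))
  = c.pb (basis κ) * (c.pf1 c.thb m1 x1 (basis κ) * (c.pf2 c.thb (fun _ => true)
        (fun ν => if ν = κ then c.lo2 κ else c.hi2 ν) (basis κ)) *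
      c.pfE c.thb mE xE (basis κ)) := by
  classical
  have h := c.key m1 (fun _ => true) x1 (fun ν => if ν = κ then c.lo2 κ else c.hi2 ν) mE xE
  rw [Fintype.sum_eq_single (basis κ) (fun α hα => ?_),
      Fintype.sum_eq_single (basis κ) (fun α hα => ?_)] at h
  · exact h
  · by_cases hex : ∃ ν, ν ≠ κ ∧ α ν = true
    · obtain ⟨ν, hν, hαν⟩ := hex
      rw [c.pf2_zero ν rfl (by rw [if_neg hν, c.btop2 hαν, ← (c.tops ν).2]), mul_zero,
        zero_mul, mul_zero]
    · rcases classify_basis (off_false hex) with h0 | hκ'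
      · rw [h0, c.pf2_zero κ rfl (by rw [if_pos rfl]; exact ((c.minima κ).2).symm), mul_zero,
          zero_mul, mul_zero]
      · exact absurd hκ' hα
  · by_cases hex : ∃ ν, ν ≠ κ ∧ α ν = true
    · obtain ⟨ν, hν, hαν⟩ := hex
      rw [c.pf2_zero ν rfl (by rw [if_neg hν]; exact c.top2 hαν), mul_zero, zero_mul, mul_zero]
    · rcases classify_basis (off_false hex) with h0 | hκ'
      · rw [h0, c.pf2_zero κ rfl (by rw [if_pos rfl]; rfl), mul_zero, zero_mul, mul_zero]
      · exact absurd hκ' hα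

lemma basis_weight1_ne (κ : Fin K) :
    c.p (basis κ) * (c.pf1 c.th (fun _ => true)
        (fun ν => if ν = κ then c.lo1 κ else c.hi1 ν) (basis κ)) ≠ 0 := by
  refine mul_ne_zero (ne_of_gt (c.p_pos _)) (c.pf1_ne_zero fun ν _ => ?_)
  by_cases hν : ν = κ
  · rw [if_pos hν, hν, c.top1 (basis_self κ)]
    exact (c.lo1_lt_hi1 κ).ne'
  · rw [if_neg hν]
    exact ne_of_lt (c.lt1 (basis_ne hν))

lemma basis_weight2_ne (κ : Fin K) :
    c.p (basis κ) * (c.pf2 c.th (fun _ => true)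
        (fun ν => if ν = κ then c.lo2 κ else c.hi2 ν) (basis κ)) ≠ 0 := by
  refine mul_ne_zero (ne_of_gt (c.p_pos _)) (c.pf2_ne_zero fun ν _ => ?_)
  by_cases hν : ν = κ
  · rw [if_pos hν, hν, c.top2 (basis_self κ)]
    exact (c.lo2_lt_hi2 κ).ne'
  · rw [if_neg hν]
    exact ne_of_lt (c.lt2 (basis_ne hν))

/-- Step 2-3 : every item parameter matches at each basis class. -/
lemma basis_match (κ : Fin K) (j : Fin J) : c.th j (basis κ) = c.thb j (basis κ) := by
  classical
  -- base identities
  have base1 := c.basis_iso1 κ (fun _ => false) (fun _ => 0) (fun _ => false) (fun _ => 0)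
  rw [c.pf2_none, c.pf2_none, c.pfE_one, c.pfE_one, mul_one, mul_one, mul_one, mul_one] at base1
  have base2 := c.basis_iso2 κ (fun _ => false) (fun _ => 0) (fun _ => false) (fun _ => 0)
  rw [c.pf1_none, c.pf1_none, c.pfE_one, c.pfE_one, mul_one, mul_one, one_mul, one_mul] at base2
  -- three cases
  by_cases hj1 : (j : ℕ) < K
  · -- j = i1 k : use run B with a free first-block factor
    set k : Fin K := ⟨(j : ℕ), hj1⟩ with hk
    have hj : j = c.i1 k := Fin.ext rfl
    have e1 := c.basis_iso2 κ (fun ν => decide (ν = k)) (fun _ => c.thb (c.i1 k) (basis κ))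
      (fun _ => false) (fun _ => 0)
    rw [c.pf1_single, c.pf1_single, c.pfE_one, c.pfE_one, mul_one, mul_one] at e1
    rw [hj]
    by_contra hne
    have hsub : c.th (c.i1 k) (basis κ) - c.thb (c.i1 k) (basis κ) ≠ 0 := sub_ne_zero.2 hne
    -- e1 : p*(X*(V)) = pb*(0*(Vb)) roughly
    rw [sub_self] at e1
    have : c.p (basis κ) * (c.pf2 c.th (fun _ => true)
        (fun ν => if ν = κ then c.lo2 κ else c.hi2 ν) (basis κ)) *
        (c.th (c.i1 k) (basis κ) - c.thb (c.i1 k) (basis κ)) = 0 := by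
      linear_combination e1
    rcases mul_eq_zero.1 this with h' | h'
    · exact c.basis_weight2_ne κ h'
    · exact hsub h'
  · by_cases hj2 : (j : ℕ) < 2 * K
    · -- j = i2 k : run A with free second-block factor
      set k : Fin K := ⟨(j : ℕ) - K, by omega⟩ with hk
      have hj : j = c.i2 k := Fin.ext (by simp [i2_val, hk]; omega)
      have e1 := c.basis_iso1 κ (fun ν => decide (ν = k)) (fun _ => c.thb (c.i2 k) (basis κ))
        (fun _ => false) (fun _ => 0)
      rw [c.pf2_single, c.pf2_single, c.pfE_one, c.pfE_one, mul_one, mul_one] at e1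
      rw [hj]
      by_contra hne
      have hsub : c.th (c.i2 k) (basis κ) - c.thb (c.i2 k) (basis κ) ≠ 0 := sub_ne_zero.2 hne
      rw [sub_self] at e1
      have : c.p (basis κ) * (c.pf1 c.th (fun _ => true)
          (fun ν => if ν = κ then c.lo1 κ else c.hi1 ν) (basis κ)) *
          (c.th (c.i2 k) (basis κ) - c.thb (c.i2 k) (basis κ)) = 0 := by
        linear_combination e1
      rcases mul_eq_zero.1 this with h' | h'
      · exact c.basis_weight1_ne κ h'
      · exact hsub h'
    · -- extra item : run A with free extra factor
      have hj : 2 * K ≤ (j : ℕ) := by omega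
      have e1 := c.basis_iso1 κ (fun _ => false) (fun _ => 0)
        (fun j' => decide (j' = j)) (fun _ => c.thb j (basis κ))
      rw [c.pf2_none, c.pf2_none, c.pfE_single j hj, c.pfE_single j hj] at e1
      by_contra hne
      have hsub : c.th j (basis κ) - c.thb j (basis κ) ≠ 0 := sub_ne_zero.2 hne
      rw [sub_self] at e1
      have : c.p (basis κ) * (c.pf1 c.th (fun _ => true)
          (fun ν => if ν = κ then c.lo1 κ else c.hi1 ν) (basis κ)) *
          (c.th j (basis κ) - c.thb j (basis κ)) = 0 := by
        linear_combination e1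
      rcases mul_eq_zero.1 this with h' | h'
      · exact c.basis_weight1_ne κ h'
      · exact hsub h'

end Ctx
end Step4Proof
namespace Step4Proof

variable {J K : ℕ}

lemma classify_pair {h1 h2 : Fin K} {α : Fin K → Bool}
    (h : ∀ ν, ν ≠ h1 → ν ≠ h2 → α ν = false) :
    α = allZero K ∨ α = basis h1 ∨ α = basis h2 ∨ α = (fun i => basis h1 i || basis h2 i) := by
  by_cases e1 : α h1 = true <;> by_cases e2 : α h2 = true
  · refine Or.inr (Or.inr (Or.inr (funext fun ν => ?_)))
    by_cases hν1 : ν = h1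
    · subst hν1; simp [e1, basis_self]
    · by_cases hν2 : ν = h2
      · subst hν2; simp [e2, basis_self]
      · simp [h ν hν1 hν2, basis_ne hν1, basis_ne hν2]
  · refine Or.inr (Or.inl (funext fun ν => ?_))
    by_cases hν1 : ν = h1
    · subst hν1; simp [e1, basis_self]
    · rw [basis_ne hν1]
      by_cases hν2 : ν = h2
      · subst hν2; simpa using e2
      · exact h ν hν1 hν2
  · refine Or.inr (Or.inr (Or.inl (funext fun ν => ?_)))
    by_cases hν2 : ν = h2
    · subst hν2; simp [e2, basis_self]
    · rw [basis_ne hν2]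
      by_cases hν1 : ν = h1
      · subst hν1; simpa using e1
      · exact h ν hν1 hν2
  · refine Or.inl (funext fun ν => ?_)
    by_cases hν1 : ν = h1
    · subst hν1; simpa [allZero] using e1
    · by_cases hν2 : ν = h2
      · subst hν2; simpa [allZero] using e2
      · exact h ν hν1 hν2

namespace Ctx

variable (c : Ctx J K)

lemma pf1_double {g : Fin J → (Fin K → Bool) → ℝ} {x : Fin K → ℝ} {a b : Fin K} (hab : a ≠ b)
    (α : Fin K → Bool) :
    c.pf1 g (fun ν => decide (ν = a ∨ ν = b)) x α
      = (g (c.i1 a) α - x a) * (g (c.i1 b) α - x b) := by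
  rw [pf1]
  rw [show (∏ ν, (if (decide (ν = a ∨ ν = b) : Bool) then g (c.i1 ν) α - x ν else 1))
      = ∏ ν ∈ univ.filter (fun ν => (decide (ν = a ∨ ν = b) : Bool) = true),
          (g (c.i1 ν) α - x ν) from (Finset.prod_filter _ _).symm]
  rw [show univ.filter (fun ν => (decide (ν = a ∨ ν = b) : Bool) = true) = ({a, b} : Finset (Fin K))
      from by ext ν; simp]
  exact Finset.prod_pair hab

lemma pf2_double {g : Fin J → (Fin K → Bool) → ℝ} {x : Fin K → ℝ} {a b : Fin K} (hab : a ≠ b)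
    (α : Fin K → Bool) :
    c.pf2 g (fun ν => decide (ν = a ∨ ν = b)) x α
      = (g (c.i2 a) α - x a) * (g (c.i2 b) α - x b) := by
  rw [pf2]
  rw [show (∏ ν, (if (decide (ν = a ∨ ν = b) : Bool) then g (c.i2 ν) α - x ν else 1))
      = ∏ ν ∈ univ.filter (fun ν => (decide (ν = a ∨ ν = b) : Bool) = true),
          (g (c.i2 ν) α - x ν) from (Finset.prod_filter _ _).symm]
  rw [show univ.filter (fun ν => (decide (ν = a ∨ ν = b) : Bool) = true) = ({a, b} : Finset (Fin K))
      from by ext ν; simp]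
  exact Finset.prod_pair hab

section main
variable {h1 h2 : Fin K}

/-- run A for step 4 : isolate the two-attribute class; kills and fixed factors
use the first identity block plus item `i2 h1`. -/
lemma pair_iso1 (hne : h1 ≠ h2) (m2 : Fin K → Bool) (x2 : Fin K → ℝ) (mE : Fin J → Bool) (xE : Fin J → ℝ)
    (hm2h1 : m2 h1 = true) (hx2h1 : x2 h1 = c.lo2 h1) :
    c.p (fun i => basis h1 i || basis h2 i) *
      (c.pf1 c.th (fun _ => true)
        (fun ν => if ν = h1 then c.th (c.i1 h1) (basis h2)
          else if ν = h2 then c.th (c.i1 h2) (basis h1) else c.hi1 ν)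
        (fun i => basis h1 i || basis h2 i) *
      c.pf2 c.th m2 x2 (fun i => basis h1 i || basis h2 i) *
      c.pfE c.th mE xE (fun i => basis h1 i || basis h2 i))
  = c.pb (fun i => basis h1 i || basis h2 i) *
      (c.pf1 c.thb (fun _ => true)
        (fun ν => if ν = h1 then c.th (c.i1 h1) (basis h2)
          else if ν = h2 then c.th (c.i1 h2) (basis h1) else c.hi1 ν)
        (fun i => basis h1 i || basis h2 i) *
      c.pf2 c.thb m2 x2 (fun i => basis h1 i || basis h2 i) *
      c.pfE c.thb mE xE (fun i => basis h1 i || basis h2 i)) := by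
  classical
  have h := c.key (fun _ => true) m2
    (fun ν => if ν = h1 then c.th (c.i1 h1) (basis h2)
      else if ν = h2 then c.th (c.i1 h2) (basis h1) else c.hi1 ν) x2 mE xE
  rw [Fintype.sum_eq_single (fun i => basis h1 i || basis h2 i) (fun α hα => ?_),
      Fintype.sum_eq_single (fun i => basis h1 i || basis h2 i) (fun α hα => ?_)] at h
  · exact h
  · -- bar kills
    by_cases hex : ∃ ν, ν ≠ h1 ∧ ν ≠ h2 ∧ α ν = true
    · obtain ⟨ν, hν1, hν2, hαν⟩ := hex
      rw [c.pf1_zero ν rfl (by rw [if_neg hν1, if_neg hν2, c.btop1 hαν, ← (c.tops ν).1]),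
        zero_mul, zero_mul, mul_zero]
    · push_neg at hex
      have hoff : ∀ ν, ν ≠ h1 → ν ≠ h2 → α ν = false := by
        intro ν a b; simpa using hex ν a b
      rcases classify_pair hoff with h0 | hb1 | hb2 | hββ
      · rw [h0, c.pf2_zero h1 hm2h1 (by rw [hx2h1]; exact ((c.minima h1).2).symm),
          mul_zero, zero_mul, mul_zero]
      · rw [hb1, c.pf1_zero h2 rfl
          (by rw [if_neg (Ne.symm hne), if_pos rfl, ← c.basis_match h1 (c.i1 h2)]),
          zero_mul, zero_mul, mul_zero]
      · rw [hb2, c.pf1_zero h1 rfl (by rw [if_pos rfl, ← c.basis_match h2 (c.i1 h1)]),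
          zero_mul, zero_mul, mul_zero]
      · exact absurd hββ hα
  · -- non-bar kills
    by_cases hex : ∃ ν, ν ≠ h1 ∧ ν ≠ h2 ∧ α ν = true
    · obtain ⟨ν, hν1, hν2, hαν⟩ := hex
      rw [c.pf1_zero ν rfl (by rw [if_neg hν1, if_neg hν2]; exact c.top1 hαν),
        zero_mul, zero_mul, mul_zero]
    · push_neg at hex
      have hoff : ∀ ν, ν ≠ h1 → ν ≠ h2 → α ν = false := by
        intro ν a b; simpa using hex ν a b
      rcases classify_pair hoff with h0 | hb1 | hb2 | hββ
      · rw [h0, c.pf2_zero h1 hm2h1 (by rw [hx2h1]; rfl), mul_zero, zero_mul, mul_zero]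
      · rw [hb1, c.pf1_zero h2 rfl (by rw [if_neg (Ne.symm hne), if_pos rfl]),
          zero_mul, zero_mul, mul_zero]
      · rw [hb2, c.pf1_zero h1 rfl (by rw [if_pos rfl]), zero_mul, zero_mul, mul_zero]
      · exact absurd hββ hα

/-- run B for step 4 : kills via the second identity block. -/
lemma pair_iso2 (hne : h1 ≠ h2) (m1 : Fin K → Bool) (x1 : Fin K → ℝ) (mE : Fin J → Bool) (xE : Fin J → ℝ)
    (hm1h1 : m1 h1 = true) (hx1h1 : x1 h1 = c.lo1 h1) :
    c.p (fun i => basis h1 i || basis h2 i) *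
      (c.pf1 c.th m1 x1 (fun i => basis h1 i || basis h2 i) *
      c.pf2 c.th (fun _ => true)
        (fun ν => if ν = h1 then c.th (c.i2 h1) (basis h2)
          else if ν = h2 then c.th (c.i2 h2) (basis h1) else c.hi2 ν)
        (fun i => basis h1 i || basis h2 i) *
      c.pfE c.th mE xE (fun i => basis h1 i || basis h2 i))
  = c.pb (fun i => basis h1 i || basis h2 i) *
      (c.pf1 c.thb m1 x1 (fun i => basis h1 i || basis h2 i) *
      c.pf2 c.thb (fun _ => true)
        (fun ν => if ν = h1 then c.th (c.i2 h1) (basis h2)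
          else if ν = h2 then c.th (c.i2 h2) (basis h1) else c.hi2 ν)
        (fun i => basis h1 i || basis h2 i) *
      c.pfE c.thb mE xE (fun i => basis h1 i || basis h2 i)) := by
  classical
  have h := c.key m1 (fun _ => true) x1
    (fun ν => if ν = h1 then c.th (c.i2 h1) (basis h2)
      else if ν = h2 then c.th (c.i2 h2) (basis h1) else c.hi2 ν) mE xE
  rw [Fintype.sum_eq_single (fun i => basis h1 i || basis h2 i) (fun α hα => ?_),
      Fintype.sum_eq_single (fun i => basis h1 i || basis h2 i) (fun α hα => ?_)] at h
  · exact h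
  · by_cases hex : ∃ ν, ν ≠ h1 ∧ ν ≠ h2 ∧ α ν = true
    · obtain ⟨ν, hν1, hν2, hαν⟩ := hex
      rw [c.pf2_zero ν rfl (by rw [if_neg hν1, if_neg hν2, c.btop2 hαν, ← (c.tops ν).2]),
        mul_zero, zero_mul, mul_zero]
    · push_neg at hex
      have hoff : ∀ ν, ν ≠ h1 → ν ≠ h2 → α ν = false := by
        intro ν a b; simpa using hex ν a b
      rcases classify_pair hoff with h0 | hb1 | hb2 | hββ
      · rw [h0, c.pf1_zero h1 hm1h1 (by rw [hx1h1]; exact ((c.minima h1).1).symm),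
          zero_mul, zero_mul, mul_zero]
      · rw [hb1, c.pf2_zero h2 rfl
          (by rw [if_neg (Ne.symm hne), if_pos rfl, ← c.basis_match h1 (c.i2 h2)]),
          mul_zero, zero_mul, mul_zero]
      · rw [hb2, c.pf2_zero h1 rfl (by rw [if_pos rfl, ← c.basis_match h2 (c.i2 h1)]),
          mul_zero, zero_mul, mul_zero]
      · exact absurd hββ hα
  · by_cases hex : ∃ ν, ν ≠ h1 ∧ ν ≠ h2 ∧ α ν = true
    · obtain ⟨ν, hν1, hν2, hαν⟩ := hex
      rw [c.pf2_zero ν rfl (by rw [if_neg hν1, if_neg hν2]; exact c.top2 hαν),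
        mul_zero, zero_mul, mul_zero]
    · push_neg at hex
      have hoff : ∀ ν, ν ≠ h1 → ν ≠ h2 → α ν = false := by
        intro ν a b; simpa using hex ν a b
      rcases classify_pair hoff with h0 | hb1 | hb2 | hββ
      · rw [h0, c.pf1_zero h1 hm1h1 (by rw [hx1h1]; rfl), zero_mul, zero_mul, mul_zero]
      · rw [hb1, c.pf2_zero h2 rfl (by rw [if_neg (Ne.symm hne), if_pos rfl]),
          mul_zero, zero_mul, mul_zero]
      · rw [hb2, c.pf2_zero h1 rfl (by rw [if_pos rfl]), mul_zero, zero_mul, mul_zero]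
      · exact absurd hββ hα

end main

end Ctx
end Step4Proof
namespace Step4Proof

variable {J K : ℕ}

namespace Ctx

variable (c : Ctx J K)

/-- Step 4, assembled. -/
lemma main (h1 h2 : Fin K) (hlt : h1 < h2) :
    (∀ j : Fin J,
      c.th j (fun i => basis h1 i || basis h2 i) = c.thb j (fun i => basis h1 i || basis h2 i)) ∧
    c.p (fun i => basis h1 i || basis h2 i) = c.pb (fun i => basis h1 i || basis h2 i) := by
  classical
  have hne : h1 ≠ h2 := ne_of_lt hlt
  set β : Fin K → Bool := fun i => basis h1 i || basis h2 i with hβdef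
  have hβ1 : β h1 = true := by simp [hβdef, basis_self]
  have hβ2 : β h2 = true := by simp [hβdef, basis_self]
  have hβoff : ∀ ν, ν ≠ h1 → ν ≠ h2 → β ν = false := by
    intro ν a b
    simp [hβdef, basis_ne a, basis_ne b]
  have hb21 : (basis h2) h1 = false := basis_ne hne
  have hb12 : (basis h1) h2 = false := basis_ne (Ne.symm hne)
  -- the fixed non-bar weights
  have hW1 : c.pf1 c.th (fun _ => true)
      (fun ν => if ν = h1 then c.th (c.i1 h1) (basis h2)
        else if ν = h2 then c.th (c.i1 h2) (basis h1) else c.hi1 ν) β ≠ 0 := by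
    refine c.pf1_ne_zero fun ν _ => ?_
    by_cases hν1 : ν = h1
    · subst hν1
      rw [if_pos rfl, c.top1 hβ1]
      exact (c.lt1 hb21).ne'
    · by_cases hν2 : ν = h2
      · subst hν2
        rw [if_neg hν1, if_pos rfl, c.top1 hβ2]
        exact (c.lt1 hb12).ne'
      · rw [if_neg hν1, if_neg hν2]
        exact ne_of_lt (c.lt1 (hβoff ν hν1 hν2))
  have hW2 : c.pf2 c.th (fun _ => true)
      (fun ν => if ν = h1 then c.th (c.i2 h1) (basis h2)
        else if ν = h2 then c.th (c.i2 h2) (basis h1) else c.hi2 ν) β ≠ 0 := by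
    refine c.pf2_ne_zero fun ν _ => ?_
    by_cases hν1 : ν = h1
    · subst hν1
      rw [if_pos rfl, c.top2 hβ1]
      exact (c.lt2 hb21).ne'
    · by_cases hν2 : ν = h2
      · subst hν2
        rw [if_neg hν1, if_pos rfl, c.top2 hβ2]
        exact (c.lt2 hb12).ne'
      · rw [if_neg hν1, if_neg hν2]
        exact ne_of_lt (c.lt2 (hβoff ν hν1 hν2))
  have hF2 : c.th (c.i2 h1) β - c.lo2 h1 ≠ 0 := by
    rw [c.top2 hβ1]
    exact sub_ne_zero.2 (c.lo2_lt_hi2 h1).ne'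
  have hF1 : c.th (c.i1 h1) β - c.lo1 h1 ≠ 0 := by
    rw [c.top1 hβ1]
    exact sub_ne_zero.2 (c.lo1_lt_hi1 h1).ne'
  -- (a) matching at β for extra items
  have hExtra : ∀ j : Fin J, 2 * K ≤ (j : ℕ) → c.th j β = c.thb j β := by
    intro j0 hj0
    have e := c.pair_iso1 hne (fun ν => decide (ν = h1)) (fun _ => c.lo2 h1)
      (fun j => decide (j = j0)) (fun _ => c.thb j0 β) (by simp) rfl
    rw [c.pf2_single, c.pf2_single, c.pfE_single j0 hj0, c.pfE_single j0 hj0, sub_self] at e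
    have hz : c.p β * (c.pf1 c.th (fun _ => true)
        (fun ν => if ν = h1 then c.th (c.i1 h1) (basis h2)
          else if ν = h2 then c.th (c.i1 h2) (basis h1) else c.hi1 ν) β) *
        ((c.th (c.i2 h1) β - c.lo2 h1) * (c.th j0 β - c.thb j0 β)) = 0 := by
      linear_combination e
    rcases mul_eq_zero.1 hz with h' | h'
    · rcases mul_eq_zero.1 h' with h' | h'
      · exact absurd h' (ne_of_gt (c.p_pos _))
      · exact absurd h' hW1
    rcases mul_eq_zero.1 h' with h' | h'
    · exact absurd h' hF2
    · linarith [sub_eq_zero.1 h']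
  -- (b) matching at β for second-block items
  have hBlock2 : ∀ ρ : Fin K, c.th (c.i2 ρ) β = c.thb (c.i2 ρ) β := by
    intro ρ
    by_cases hρ : ρ = h1
    · subst hρ
      rw [c.top2 hβ1, c.btop2 hβ1, (c.tops ρ).2]
    · have e := c.pair_iso1 hne (fun ν => decide (ν = h1 ∨ ν = ρ))
        (fun ν => if ν = h1 then c.lo2 h1 else c.thb (c.i2 ρ) β)
        (fun _ => false) (fun _ => 0) (by simp) (by simp)
      rw [c.pf2_double (fun h => hρ h.symm), c.pf2_double (fun h => hρ h.symm),
        c.pfE_one, c.pfE_one, mul_one, mul_one] at e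
      rw [if_pos rfl, if_neg hρ, sub_self, mul_zero] at e
      have hz : c.p β * (c.pf1 c.th (fun _ => true)
          (fun ν => if ν = h1 then c.th (c.i1 h1) (basis h2)
            else if ν = h2 then c.th (c.i1 h2) (basis h1) else c.hi1 ν) β) *
          ((c.th (c.i2 h1) β - c.lo2 h1) * (c.th (c.i2 ρ) β - c.thb (c.i2 ρ) β)) = 0 := by
        linear_combination e
      rcases mul_eq_zero.1 hz with h' | h'
      · rcases mul_eq_zero.1 h' with h' | h'
        · exact absurd h' (ne_of_gt (c.p_pos _))
        · exact absurd h' hW1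
      rcases mul_eq_zero.1 h' with h' | h'
      · exact absurd h' hF2
      · linarith [sub_eq_zero.1 h']
  -- (c) matching at β for first-block items
  have hBlock1 : ∀ ρ : Fin K, c.th (c.i1 ρ) β = c.thb (c.i1 ρ) β := by
    intro ρ
    by_cases hρ : ρ = h1
    · subst hρ
      rw [c.top1 hβ1, c.btop1 hβ1, (c.tops ρ).1]
    · have e := c.pair_iso2 hne (fun ν => decide (ν = h1 ∨ ν = ρ))
        (fun ν => if ν = h1 then c.lo1 h1 else c.thb (c.i1 ρ) β)
        (fun _ => false) (fun _ => 0) (by simp) (by simp)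
      rw [c.pf1_double (fun h => hρ h.symm), c.pf1_double (fun h => hρ h.symm),
        c.pfE_one, c.pfE_one, mul_one, mul_one] at e
      rw [if_pos rfl, if_neg hρ, sub_self, mul_zero] at e
      have hz : c.p β * (c.pf2 c.th (fun _ => true)
          (fun ν => if ν = h1 then c.th (c.i2 h1) (basis h2)
            else if ν = h2 then c.th (c.i2 h2) (basis h1) else c.hi2 ν) β) *
          ((c.th (c.i1 h1) β - c.lo1 h1) * (c.th (c.i1 ρ) β - c.thb (c.i1 ρ) β)) = 0 := by
        linear_combination e
      rcases mul_eq_zero.1 hz with h' | h'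
      · rcases mul_eq_zero.1 h' with h' | h'
        · exact absurd h' (ne_of_gt (c.p_pos _))
        · exact absurd h' hW2
      rcases mul_eq_zero.1 h' with h' | h'
      · exact absurd h' hF1
      · linarith [sub_eq_zero.1 h']
  -- all items match at β
  have hAll : ∀ j : Fin J, c.th j β = c.thb j β := by
    intro j
    by_cases hj1 : (j : ℕ) < K
    · have hj : j = c.i1 ⟨(j : ℕ), hj1⟩ := Fin.ext rfl
      rw [hj]; exact hBlock1 _
    · by_cases hj2 : (j : ℕ) < 2 * K
      · have hj : j = c.i2 ⟨(j : ℕ) - K, by omega⟩ := Fin.ext (by simp [i2_val]; omega)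
        rw [hj]; exact hBlock2 _
      · exact hExtra j (by omega)
  refine ⟨hAll, ?_⟩
  -- p matching
  have e := c.pair_iso1 hne (fun ν => decide (ν = h1)) (fun _ => c.lo2 h1)
    (fun _ => false) (fun _ => 0) (by simp) rfl
  rw [c.pf2_single, c.pf2_single, c.pfE_one, c.pfE_one, mul_one, mul_one] at e
  have hpf1eq : c.pf1 c.thb (fun _ => true)
      (fun ν => if ν = h1 then c.th (c.i1 h1) (basis h2)
        else if ν = h2 then c.th (c.i1 h2) (basis h1) else c.hi1 ν) β
    = c.pf1 c.th (fun _ => true)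
      (fun ν => if ν = h1 then c.th (c.i1 h1) (basis h2)
        else if ν = h2 then c.th (c.i1 h2) (basis h1) else c.hi1 ν) β := by
    rw [pf1, pf1]
    exact Finset.prod_congr rfl fun ν _ => by rw [hBlock1 ν]
  have hf2eq : c.thb (c.i2 h1) β = c.th (c.i2 h1) β := (hBlock2 h1).symm
  rw [hpf1eq, hf2eq] at e
  have hcan : (c.pf1 c.th (fun _ => true)
      (fun ν => if ν = h1 then c.th (c.i1 h1) (basis h2)
        else if ν = h2 then c.th (c.i1 h2) (basis h1) else c.hi1 ν) β *
      (c.th (c.i2 h1) β - c.lo2 h1)) * (c.p β - c.pb β) = 0 := by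
    linear_combination e
  rcases mul_eq_zero.1 hcan with h' | h'
  · rcases mul_eq_zero.1 h' with h' | h'
    exacts [absurd h' hW1, absurd h' hF2]
  · linarith [sub_eq_zero.1 h']

end Ctx
end Step4Proof

/-- **Step 4.** Under the standing hypotheses, for all `h₁ < h₂` and every item `j`,
`θ_{j,e_{h₁}+e_{h₂}} = θ̄_{j,e_{h₁}+e_{h₂}}`, and `p_{e_{h₁}+e_{h₂}} = p̄_{e_{h₁}+e_{h₂}}`. -/
theorem step4_two_attribute_eq
    {J K : ℕ} (hJ : 2 * K ≤ J) (Q : Fin J → Fin K → Bool)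
    (θ θb : Fin J → (Fin K → Bool) → ℝ) (p pb : (Fin K → Bool) → ℝ)
    (hθ : ThetaValid θ) (hθb : ThetaValid θb) (hp : PValid p) (hpb : PValid pb)
    (hR1 : R1 Q θ) (hR1b : R1 Q θb) (hR2 : R2 Q θ) (hR2b : R2 Q θb)
    (hC1 : C1 Q) (hC2 : C2 θ)
    (hT : ∀ r : Fin J → Bool, Tp θ p r = Tp θb pb r) :
    ∀ (h1 h2 : Fin K), h1 < h2 →
      (∀ j : Fin J,
        θ j (fun i => basis h1 i || basis h2 i) = θb j (fun i => basis h1 i || basis h2 i)) ∧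
      p (fun i => basis h1 i || basis h2 i) = pb (fun i => basis h1 i || basis h2 i) := by
  intro h1 h2 hlt
  exact (Step4Proof.Ctx.mk Q θ θb p pb hJ hθ hθb hp hpb hR1 hR1b hR2 hR2b hC1 hC2 hT).main
    h1 h2 hlt
end

section
/- (Invertibility of the T-matrix for an identity Q-matrix.) Let K ≥ 1 and let Θ = (θ_{k,α}) be a K × 2^K real matrix (rows indexed by k ∈ {1,…,K}, columns by α ∈ {0,1}^K) such that for every k: θ_{k,α} = θ_{k,α'} whenever α_k = α'_k = 1, and θ_{k,α} ≠ θ_{k,1} whenever α_k = 0 (1 denotes the all-ones profile). Then the 2^K × 2^K matrix whose (r, α) entry is ∏_{k : r_k = 1} θ_{k,α} (rows indexed by r ∈ {0,1}^K, empty product = 1) is invertible. -/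
open Finset

namespace TMAux

def enc (K : ℕ) : (Fin K → Bool) ≃ Fin (2 ^ K) :=
  (Equiv.arrowCongr (Equiv.refl (Fin K)) finTwoEquiv.symm).trans finFunctionFinEquiv

lemma enc_le_of_dominates {K : ℕ} {u v : Fin K → Bool} (h : dominates u v) :
    enc K v ≤ enc K u := by
  rw [Fin.le_def]
  simp only [enc, Equiv.trans_apply, finFunctionFinEquiv_apply]
  apply Finset.sum_le_sum
  intro i _
  apply Nat.mul_le_mul_right
  simp only [Equiv.arrowCongr_apply, Equiv.refl_symm, Equiv.refl_apply, Function.comp]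
  cases hv : v i
  · cases u i <;> decide
  · rw [h i hv]

lemma not_dominates_iff {K : ℕ} {u v : Fin K → Bool} :
    ¬ dominates u v ↔ ∃ k, v k = true ∧ u k = false := by
  unfold dominates
  push_neg
  simp

def negPerm (K : ℕ) : Equiv.Perm (Fin K → Bool) :=
  Function.Involutive.toPerm (fun u k => !u k) (fun u => by funext k; simp)

lemma negPerm_apply {K : ℕ} (u : Fin K → Bool) (k : Fin K) : negPerm K u k = !u k := rfl

end TMAux

/-- Invertibility of the T-matrix for an identity Q-matrix: if `θ_{k,α}` depends on `α`
only through `α_k` when `α_k = 1`, and `θ_{k,α} ≠ θ_{k,1}` whenever `α_k = 0`, then the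
`2^K × 2^K` matrix with `(r, α)` entry `∏_{k : r_k = 1} θ_{k,α}` is invertible. -/
theorem identity_Q_T_matrix_invertible {K : ℕ} (hK : 1 ≤ K)
    (θ : Fin K → (Fin K → Bool) → ℝ)
    (hsame : ∀ (k : Fin K) (α α' : Fin K → Bool),
      α k = true → α' k = true → θ k α = θ k α')
    (hne : ∀ (k : Fin K) (α : Fin K → Bool), α k = false → θ k α ≠ θ k (allOne K)) :
    IsUnit (Matrix.of fun (r α : Fin K → Bool) => ∏ k, if r k then θ k α else 1) := by
  classical
  set M : Matrix (Fin K → Bool) (Fin K → Bool) ℝ :=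
    Matrix.of fun (r α : Fin K → Bool) => ∏ k, if r k then θ k α else 1 with hM
  set c : Fin K → ℝ := fun k => θ k (allOne K) with hc
  set L : Matrix (Fin K → Bool) (Fin K → Bool) ℝ :=
    Matrix.of fun (r s : Fin K → Bool) =>
      ∏ k, (if r k then (if s k then (1:ℝ) else -(c k)) else (if s k then 0 else 1)) with hL
  set N : Matrix (Fin K → Bool) (Fin K → Bool) ℝ :=
    Matrix.of fun (r α : Fin K → Bool) => ∏ k, (if r k then θ k α - c k else 1) with hN
  -- L is "zero unless s ⊆ r"
  have hLzero : ∀ r s : Fin K → Bool, ¬ dominates r s → L r s = 0 := by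
    intro r s hd
    obtain ⟨k, hsk, hrk⟩ := TMAux.not_dominates_iff.mp hd
    simp only [hL, Matrix.of_apply]
    apply Finset.prod_eq_zero (Finset.mem_univ k)
    rw [hrk, hsk]
    simp
  have hLdiag : ∀ r : Fin K → Bool, L r r = 1 := by
    intro r
    simp only [hL, Matrix.of_apply]
    apply Finset.prod_eq_one
    intro k _
    cases r k <;> simp
  -- N is zero unless r ⊆ ¬α
  have hNzero : ∀ r α : Fin K → Bool, (∃ k, r k = true ∧ α k = true) → N r α = 0 := by
    intro r α ⟨k, hrk, hak⟩
    simp only [hN, Matrix.of_apply]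
    apply Finset.prod_eq_zero (Finset.mem_univ k)
    rw [hrk, if_pos rfl, hsame k α (allOne K) hak rfl]
    ring
  -- key identity
  have hLM : L * M = N := by
    ext r α
    simp only [Matrix.mul_apply, hL, hN, hM, Matrix.of_apply, ← Finset.prod_mul_distrib]
    have key := Finset.prod_univ_sum (fun _ : Fin K => (Finset.univ : Finset Bool))
      (fun k b => (if r k then (if b then (1:ℝ) else -(c k)) else (if b then 0 else 1))
        * (if b then θ k α else 1))
    rw [Fintype.piFinset_univ] at key
    rw [← key]
    apply Finset.prod_congr rfl
    intro k _
    rw [Fintype.sum_bool]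
    cases r k <;> simp <;> ring
  -- det L = 1
  have hdetL : L.det = 1 := by
    rw [← Matrix.det_submatrix_equiv_self (TMAux.enc K).symm L]
    rw [Matrix.det_of_lowerTriangular]
    · apply Finset.prod_eq_one
      intro i _
      simp only [Matrix.submatrix_apply]
      exact hLdiag _
    · intro i j hij
      have hij' : i < j := hij
      simp only [Matrix.submatrix_apply]
      apply hLzero
      intro hd
      have := TMAux.enc_le_of_dominates hd
      simp only [Equiv.apply_symm_apply] at this
      exact absurd this (not_le.mpr hij')
  -- det N ≠ 0
  have hdetN : N.det ≠ 0 := by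
    intro h0
    have h1 : (N.submatrix id (TMAux.negPerm K)).det = 0 := by
      rw [Matrix.det_permute', h0, mul_zero]
    have h2 : (N.submatrix id (TMAux.negPerm K)).det ≠ 0 := by
      rw [← Matrix.det_submatrix_equiv_self (TMAux.enc K).symm]
      rw [Matrix.det_of_upperTriangular]
      · apply Finset.prod_ne_zero_iff.mpr
        intro i _
        simp only [Matrix.submatrix_apply, id_eq, hN, Matrix.of_apply]
        apply Finset.prod_ne_zero_iff.mpr
        intro k _
        set r := (TMAux.enc K).symm i with hr
        cases hrk : r k
        · simp
        · rw [if_pos rfl]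
          have hneg : (TMAux.negPerm K r) k = false := by
            rw [TMAux.negPerm_apply, hrk]; rfl
          have := hne k (TMAux.negPerm K r) hneg
          rw [hc]
          intro hcon
          exact this (by linarith [sub_eq_zero.mp hcon])
      · intro i j hij
        have hij' : (j : Fin (2^K)) < i := hij
        simp only [Matrix.submatrix_apply, id_eq]
        rcases Classical.em (∃ k, ((TMAux.enc K).symm i) k = true
            ∧ (TMAux.negPerm K ((TMAux.enc K).symm j)) k = true) with ⟨k, h1, h2⟩ | hno
        · exact hNzero _ _ ⟨k, h1, h2⟩
        · exfalso
          push_neg at hno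
          have hdom : dominates ((TMAux.enc K).symm j) ((TMAux.enc K).symm i) := by
            intro k hk
            have := hno k hk
            rw [TMAux.negPerm_apply] at this
            cases hjk : ((TMAux.enc K).symm j) k
            · rw [hjk] at this; simp at this
            · rfl
          have := TMAux.enc_le_of_dominates hdom
          simp only [Equiv.apply_symm_apply] at this
          exact absurd this (not_le.mpr hij')
    exact h2 h1
  -- conclude
  have hdetM : M.det ≠ 0 := by
    intro h0
    apply hdetN
    rw [← hLM, Matrix.det_mul, h0, mul_zero]
  rw [Matrix.isUnit_iff_isUnit_det]
  exact isUnit_iff_ne_zero.mpr hdetM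
end
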